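/- arXiv:2503.16933 — 7 statements merged into one kernel-verified Lean document; each statement's English description precedes it below -/
import Mathlib

section
/- Let T be a 2-isometry on a complex Hilbert space H. Then T*T is an invertible bounded operator on H, and the operator L := (T*T)⁻¹T* is a left inverse of T, i.e. L∘T = I; in particular T is left-invertible. -/
open ContinuousLinearMap

private lemma twoIso_expansive
    {H : Type*} [NormedAddCommGroup H] [InnerProductSpace ℂ H] [CompleteSpace H]
    (T : H →L[ℂ] H)
    (h2iso : ∀ h : H, ‖T (T h)‖ ^ 2 - 2 * ‖T h‖ ^ 2 + ‖h‖ ^ 2 = 0)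
    (h : H) : ‖h‖ ^ 2 ≤ ‖T h‖ ^ 2 := by
  by_contra hlt
  push_neg at hlt
  set d : ℝ := ‖T h‖ ^ 2 - ‖h‖ ^ 2 with hd
  have hdneg : d < 0 := by simp [hd]; linarith
  have step : ∀ n : ℕ, ‖(⇑T)^[n+1] h‖ ^ 2 - ‖(⇑T)^[n] h‖ ^ 2 = d := by
    intro n
    induction n with
    | zero => simp [hd]
    | succ n ih =>
      have := h2iso ((⇑T)^[n] h)
      simp only [Function.iterate_succ_apply'] at *
      linarith
  have val : ∀ n : ℕ, ‖(⇑T)^[n] h‖ ^ 2 = ‖h‖ ^ 2 + n * d := by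
    intro n
    induction n with
    | zero => simp
    | succ n ih =>
      have := step n
      push_cast
      linarith
  obtain ⟨n, hn⟩ := exists_nat_gt (‖h‖ ^ 2 / (-d))
  have hnd : ‖h‖ ^ 2 + (n : ℝ) * d < 0 := by
    have := (div_lt_iff₀ (by linarith : (0:ℝ) < -d)).mp hn
    nlinarith
  have := val n
  nlinarith [sq_nonneg ‖(⇑T)^[n] h‖]

/-- For a 2-isometry `T`, the operator `T*T` is invertible and
`L := (T*T)⁻¹ T*` is a left inverse of `T`. -/
theorem twoIsometry_adjoint_mul_self_isUnit_and_leftInverse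
    {H : Type*} [NormedAddCommGroup H] [InnerProductSpace ℂ H] [CompleteSpace H]
    (T : H →L[ℂ] H)
    (h2iso : ∀ h : H, ‖T (T h)‖ ^ 2 - 2 * ‖T h‖ ^ 2 + ‖h‖ ^ 2 = 0) :
    IsUnit (adjoint T ∘L T) ∧
      ∀ R : H →L[ℂ] H, R ∘L (adjoint T ∘L T) = 1 → (adjoint T ∘L T) ∘L R = 1 →
        (R ∘L adjoint T) ∘L T = 1 := by
  constructor
  · have hle : (1 : H →L[ℂ] H) ≤ adjoint T ∘L T := by
      rw [ContinuousLinearMap.le_def]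
      constructor
      · have h1 : IsSelfAdjoint (adjoint T ∘L T) := by
          rw [IsSelfAdjoint, star_eq_adjoint, adjoint_comp, adjoint_adjoint]
        exact (h1.sub (IsSelfAdjoint.one _)).isSymmetric
      · intro x
        have key : ‖x‖ ^ 2 ≤ ‖T x‖ ^ 2 := twoIso_expansive T h2iso x
        have h1 : (adjoint T ∘L T - 1).reApplyInnerSelf x
            = ‖T x‖ ^ 2 - ‖x‖ ^ 2 := by
          simp only [reApplyInnerSelf, sub_apply, comp_apply, one_apply,
            inner_sub_left, map_sub, adjoint_inner_left]
          rw [inner_self_eq_norm_sq (𝕜 := ℂ), ContinuousLinearMap.one_apply, inner_self_eq_norm_sq (𝕜 := ℂ)]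
        rw [h1]
        linarith
    exact CStarAlgebra.isUnit_of_le 1 hle isStrictlyPositive_one
  · intro R hR _
    rw [comp_assoc]
    exact hR
end

section
/- Let T be a bounded linear operator on a complex Hilbert space H which is concave, i.e. ‖T²h‖² − 2‖Th‖² + ‖h‖² ≤ 0 for all h ∈ H, and analytic, i.e. ⋂_{n≥0} Tⁿ(H) = {0}. Then E_T := (range T)ᗮ is a wandering subspace for T, and H equals the closed linear span of ⋃_{n≥0} Tⁿ(E_T); that is, T has the wandering subspace property. -/
open ContinuousLinearMap
open scoped ComplexInnerProductSpace

section Aux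

variable {H : Type*} [NormedAddCommGroup H] [InnerProductSpace ℂ H] [CompleteSpace H]

/-- iterate formula -/
lemma wsp_pow_succ_apply (T : H →L[ℂ] H) (n : ℕ) (x : H) :
    (T ^ (n + 1)) x = T ((T ^ n) x) := by
  rw [pow_succ']; rfl

lemma wsp_pow_succ_apply' (T : H →L[ℂ] H) (n : ℕ) (x : H) :
    (T ^ (n + 1)) x = (T ^ n) (T x) := by
  rw [pow_succ]; rfl

/-- differences of `‖T^n x‖²` are nonincreasing, hence bounded by the first one. -/
lemma wsp_growth (T : H →L[ℂ] H)
    (hconcave : ∀ h : H, ‖T (T h)‖ ^ 2 - 2 * ‖T h‖ ^ 2 + ‖h‖ ^ 2 ≤ 0)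
    (x : H) (n : ℕ) :
    ‖(T ^ n) x‖ ^ 2 ≤ ‖x‖ ^ 2 + n * (‖T x‖ ^ 2 - ‖x‖ ^ 2) := by
  have hstep : ∀ m : ℕ, ‖(T ^ (m + 1)) x‖ ^ 2 - ‖(T ^ m) x‖ ^ 2 ≤ ‖T x‖ ^ 2 - ‖x‖ ^ 2 := by
    intro m
    induction m with
    | zero => simp [pow_zero, pow_one]
    | succ k ih =>
      have hc := hconcave ((T ^ k) x)
      simp only [← wsp_pow_succ_apply] at hc
      nlinarith [ih, hc]
  induction n with
  | zero => simp
  | succ k ih =>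
    have := hstep k
    rw [Nat.cast_succ]
    nlinarith [ih, this]

/-- concave operators are expansive -/
lemma wsp_expansive (T : H →L[ℂ] H)
    (hconcave : ∀ h : H, ‖T (T h)‖ ^ 2 - 2 * ‖T h‖ ^ 2 + ‖h‖ ^ 2 ≤ 0)
    (x : H) : ‖x‖ ≤ ‖T x‖ := by
  by_contra hlt
  push_neg at hlt
  have hd : ‖T x‖ ^ 2 - ‖x‖ ^ 2 < 0 := by nlinarith [norm_nonneg x, norm_nonneg (T x)]
  obtain ⟨n, hn⟩ := exists_nat_gt (‖x‖ ^ 2 / (‖x‖ ^ 2 - ‖T x‖ ^ 2))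
  have h1 := wsp_growth T hconcave x n
  have h2 : (0 : ℝ) ≤ ‖(T ^ n) x‖ ^ 2 := sq_nonneg _
  have h3 : 0 < ‖x‖ ^ 2 - ‖T x‖ ^ 2 := by linarith
  rw [div_lt_iff₀ h3] at hn
  nlinarith

lemma wsp_pow_expansive (T : H →L[ℂ] H)
    (hconcave : ∀ h : H, ‖T (T h)‖ ^ 2 - 2 * ‖T h‖ ^ 2 + ‖h‖ ^ 2 ≤ 0)
    (n : ℕ) (x : H) : ‖x‖ ≤ ‖(T ^ n) x‖ := by
  induction n with
  | zero => simp
  | succ k ih =>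
    refine ih.trans ?_
    rw [wsp_pow_succ_apply]
    exact wsp_expansive T hconcave _

lemma wsp_range_closed (T : H →L[ℂ] H)
    (hconcave : ∀ h : H, ‖T (T h)‖ ^ 2 - 2 * ‖T h‖ ^ 2 + ‖h‖ ^ 2 ≤ 0)
    (n : ℕ) : IsClosed ((LinearMap.range ((T ^ n : H →L[ℂ] H) : H →ₗ[ℂ] H) : Submodule ℂ H) : Set H) := by
  have h := (T ^ n).antilipschitz_of_bound (K := 1)
    (fun x => by simpa using wsp_pow_expansive T hconcave n x)
  have := h.isClosed_range (T ^ n).uniformContinuous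
  convert this using 1
  rfl

/-- orthogonal projection onto a closed submodule, as a plain function. -/
noncomputable def projC (V : Submodule ℂ H) (hV : IsClosed (V : Set H)) (x : H) : H :=
  letI : CompleteSpace V := hV.completeSpace_coe
  (V.orthogonalProjectionOnto x : H)

lemma projC_mem (V : Submodule ℂ H) (hV : IsClosed (V : Set H)) (x : H) :
    projC V hV x ∈ V := by
  letI : CompleteSpace V := hV.completeSpace_coe
  exact (V.orthogonalProjectionOnto x).2

lemma projC_sub_mem (V : Submodule ℂ H) (hV : IsClosed (V : Set H)) (x : H) :
    x - projC V hV x ∈ Vᗮ := by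
  letI : CompleteSpace V := hV.completeSpace_coe
  have := V.sub_starProjection_mem_orthogonal x
  rwa [← Submodule.coe_orthogonalProjectionOnto_apply] at this

lemma projC_eq_self (V : Submodule ℂ H) (hV : IsClosed (V : Set H)) {x : H} (hx : x ∈ V) :
    projC V hV x = x := by
  letI : CompleteSpace V := hV.completeSpace_coe
  have := V.starProjection_eq_self_iff.2 hx
  rwa [← Submodule.coe_orthogonalProjectionOnto_apply] at this

lemma projC_norm_le (V : Submodule ℂ H) (hV : IsClosed (V : Set H)) (x : H) :
    ‖projC V hV x‖ ≤ ‖x‖ := by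
  letI : CompleteSpace V := hV.completeSpace_coe
  have h1 : ‖V.orthogonalProjectionOnto x‖ ≤ ‖V.orthogonalProjectionOnto‖ * ‖x‖ :=
    (V.orthogonalProjectionOnto).le_opNorm x
  have h2 : ‖V.orthogonalProjectionOnto‖ ≤ 1 := Submodule.orthogonalProjectionOnto_norm_le V
  calc ‖projC V hV x‖ = ‖V.orthogonalProjectionOnto x‖ := rfl
    _ ≤ ‖V.orthogonalProjectionOnto‖ * ‖x‖ := h1
    _ ≤ 1 * ‖x‖ := by
        apply mul_le_mul_of_nonneg_right h2 (norm_nonneg x)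
    _ = ‖x‖ := one_mul _

/-- For a nested decreasing sequence of closed subspaces with trivial intersection,
the projections of a fixed vector tend to zero in norm. -/
lemma wsp_proj_small {V : ℕ → Submodule ℂ H} (hcl : ∀ n, IsClosed ((V n : Set H)))
    (hanti : ∀ m n : ℕ, m ≤ n → V n ≤ V m) (hbot : (⨅ n, V n) = ⊥) (g : H) :
    ∀ ε : ℝ, 0 < ε → ∃ m : ℕ, ∃ q : H, ‖q‖ < ε ∧ g - q ∈ (V m)ᗮ ∧ q ∈ V m := by
  intro ε hε
  set p : ℕ → H := fun m => projC (V m) (hcl m) g with hp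
  have hmemp : ∀ m, p m ∈ V m := fun m => projC_mem _ _ _
  have hsub : ∀ m, g - p m ∈ (V m)ᗮ := fun m => projC_sub_mem _ _ _
  -- orthogonality of increments
  have hdiff : ∀ m n : ℕ, m ≤ n → p m - p n ∈ (V n)ᗮ := by
    intro m n hmn
    have h1 : g - p n ∈ (V n)ᗮ := hsub n
    have h2 : g - p m ∈ (V n)ᗮ := Submodule.orthogonal_le (hanti m n hmn) (hsub m)
    have : p m - p n = (g - p n) - (g - p m) := by abel
    rw [this]
    exact Submodule.sub_mem _ h1 h2
  have hpyth : ∀ m n : ℕ, m ≤ n → ‖p m‖ ^ 2 = ‖p n‖ ^ 2 + ‖p m - p n‖ ^ 2 := by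
    intro m n hmn
    have horth : ⟪p n, p m - p n⟫ = 0 :=
      (Submodule.mem_orthogonal (V n) _).1 (hdiff m n hmn) (p n) (hmemp n)
    have : p m = p n + (p m - p n) := by abel
    rw [this, @norm_add_sq ℂ]
    rw [horth]
    simp
  have hanti_norm : Antitone fun m => ‖p m‖ ^ 2 := by
    apply antitone_nat_of_succ_le
    intro n
    have := hpyth n (n + 1) (Nat.le_succ n)
    nlinarith [sq_nonneg ‖p n - p (n+1)‖]
  have hbdd : BddBelow (Set.range fun m => ‖p m‖ ^ 2) := by
    refine ⟨0, ?_⟩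
    rintro y ⟨m, rfl⟩
    positivity
  have htend : Filter.Tendsto (fun m => ‖p m‖ ^ 2) Filter.atTop
      (nhds (⨅ m, ‖p m‖ ^ 2)) := tendsto_atTop_ciInf hanti_norm hbdd
  -- Cauchy
  have hcauchy : CauchySeq p := by
    rw [Metric.cauchySeq_iff']
    intro δ hδ
    set L := ⨅ m, ‖p m‖ ^ 2 with hL
    have hLle : ∀ m, L ≤ ‖p m‖ ^ 2 := fun m => ciInf_le hbdd m
    obtain ⟨N, hN⟩ := (Metric.tendsto_atTop.1 htend) (δ ^ 2) (by positivity)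
    refine ⟨N, fun n hn => ?_⟩
    have h1 := hpyth N n hn
    have h2 := hN N le_rfl
    have h3 := hLle n
    have h4 : ‖p N - p n‖ ^ 2 < δ ^ 2 := by
      rw [Real.dist_eq, abs_lt] at h2
      nlinarith
    have h5 : dist (p n) (p N) = ‖p N - p n‖ := by
      rw [dist_eq_norm, ← norm_neg]; congr 1; abel
    rw [h5]
    exact lt_of_pow_lt_pow_left₀ 2 hδ.le h4
  obtain ⟨w, hw⟩ := cauchySeq_tendsto_of_complete hcauchy
  have hwV : ∀ k, w ∈ V k := by
    intro k
    refine (hcl k).mem_of_tendsto hw ?_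
    filter_upwards [Filter.eventually_ge_atTop k] with n hn
    exact hanti k n hn (hmemp n)
  have hw0 : w = 0 := by
    have : w ∈ (⨅ n, V n) := (Submodule.mem_iInf _).2 hwV
    rw [hbot] at this
    simpa using this
  have hnorm0 : Filter.Tendsto (fun m => ‖p m‖) Filter.atTop (nhds 0) := by
    have := hw.norm
    rw [hw0, norm_zero] at this
    exact this
  obtain ⟨m, hm⟩ := (Filter.eventually_atTop.1 ((hnorm0.eventually_lt_const hε))).imp
    (fun m hm => hm m le_rfl)
  exact ⟨m, p m, hm, hsub m, hmemp m⟩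

end Aux

/-- **Richter.** An analytic concave operator has the wandering
subspace property, with wandering subspace `E_T = (range T)ᗮ`. -/
theorem analytic_concave_wandering_subspace_property
    {H : Type*} [NormedAddCommGroup H] [InnerProductSpace ℂ H] [CompleteSpace H]
    (T : H →L[ℂ] H)
    (hconcave : ∀ h : H, ‖T (T h)‖ ^ 2 - 2 * ‖T h‖ ^ 2 + ‖h‖ ^ 2 ≤ 0)
    (hanalytic : (⨅ n : ℕ, LinearMap.range ((T ^ n : H →L[ℂ] H) : H →ₗ[ℂ] H)) = ⊥) :
    (∀ n : ℕ, 1 ≤ n → ∀ x ∈ (LinearMap.range (T : H →ₗ[ℂ] H))ᗮ, ∀ y ∈ (LinearMap.range (T : H →ₗ[ℂ] H))ᗮ,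
        ⟪x, (T ^ n) y⟫ = 0) ∧
    (⨆ n : ℕ, ((LinearMap.range (T : H →ₗ[ℂ] H))ᗮ).map ((T ^ n : H →L[ℂ] H) : H →ₗ[ℂ] H)).topologicalClosure = ⊤ := by
  constructor
  · -- wandering subspace property: trivial orthogonality
    intro n hn x hx y hy
    obtain ⟨k, rfl⟩ : ∃ k, n = k + 1 := ⟨n - 1, by omega⟩
    have hmem : (T ^ (k + 1)) y ∈ LinearMap.range (T : H →ₗ[ℂ] H) :=
      ⟨(T ^ k) y, (wsp_pow_succ_apply T k y).symm⟩
    have := (Submodule.mem_orthogonal _ _).1 hx _ hmem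
    rw [← inner_conj_symm, this, map_zero]
  · -- density
    set S : Submodule ℂ H := ⨆ n : ℕ, ((LinearMap.range (T : H →ₗ[ℂ] H))ᗮ).map ((T ^ n : H →L[ℂ] H) : H →ₗ[ℂ] H) with hSdef
    rw [← Submodule.orthogonal_orthogonal_eq_closure]
    suffices hbot : Sᗮ = ⊥ by rw [hbot, Submodule.bot_orthogonal_eq_top]
    rw [Submodule.eq_bot_iff]
    intro g hg
    -- the range of T is closed
    have hTcl : IsClosed ((LinearMap.range (T : H →ₗ[ℂ] H) : Submodule ℂ H) : Set H) := by
      have h := T.antilipschitz_of_bound (K := 1)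
        (fun x => by simpa using wsp_expansive T hconcave x)
      have := h.isClosed_range T.uniformContinuous
      convert this using 1
      rfl
    -- the defect sequence
    have hchoice : ∀ x : H, ∃ y : H, T y = projC _ hTcl x := fun x =>
      LinearMap.mem_range.1 (projC_mem (LinearMap.range (T : H →ₗ[ℂ] H)) hTcl x)
    choose R hR using hchoice
    obtain ⟨h, hh0, hhsucc⟩ : ∃ h : ℕ → H, h 0 = g ∧ ∀ n, h (n + 1) = R (h n) :=
      ⟨fun n => R^[n] g, rfl, fun n => Function.iterate_succ_apply' R n g⟩
    have hTh : ∀ n, T (h (n + 1)) = projC _ hTcl (h n) := by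
      intro n
      rw [hhsucc]
      exact hR (h n)
    have he : ∀ n, h n - projC _ hTcl (h n) ∈ (LinearMap.range (T : H →ₗ[ℂ] H))ᗮ := fun n =>
      projC_sub_mem _ _ _
    -- partial sums lie in S
    have hdec : ∀ n : ℕ, g - (T ^ n) (h n) ∈ S := by
      intro n
      induction n with
      | zero => simp [hh0]
      | succ k ih =>
        have h1 : (T ^ (k + 1)) (h (k + 1)) = (T ^ k) (T (h (k + 1))) :=
          wsp_pow_succ_apply' T k (h (k + 1))
        have h2 : (T ^ k) (T (h (k + 1)))
            = (T ^ k) (h k) - (T ^ k) (h k - projC _ hTcl (h k)) := by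
          rw [hTh k, ← map_sub]
          congr 1
          abel
        have h3 : g - (T ^ (k + 1)) (h (k + 1))
            = (g - (T ^ k) (h k)) + (T ^ k) (h k - projC _ hTcl (h k)) := by
          rw [h1, h2]; abel
        rw [h3]
        refine Submodule.add_mem _ ih ?_
        have hmem : (T ^ k) (h k - projC _ hTcl (h k))
            ∈ ((LinearMap.range (T : H →ₗ[ℂ] H))ᗮ).map ((T ^ k : H →L[ℂ] H) : H →ₗ[ℂ] H) :=
          Submodule.mem_map_of_mem (he k)
        exact (le_iSup (fun n : ℕ => ((LinearMap.range (T : H →ₗ[ℂ] H))ᗮ).map ((T ^ n : H →L[ℂ] H) : H →ₗ[ℂ] H)) k) hmem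
    -- monotone energies
    obtain ⟨t, ht⟩ : ∃ t : ℕ → ℝ, ∀ n, t n = ‖h n‖ ^ 2 := ⟨_, fun n => rfl⟩
    have hproj_le : ∀ n, ‖projC _ hTcl (h n)‖ ≤ ‖h n‖ := fun n =>
      projC_norm_le (LinearMap.range (T : H →ₗ[ℂ] H)) hTcl (h n)
    have ht_succ : ∀ n, t (n + 1) ≤ t n := by
      intro n
      have h1 : ‖h (n + 1)‖ ≤ ‖T (h (n + 1))‖ := wsp_expansive T hconcave _
      have h2 : ‖T (h (n + 1))‖ ≤ ‖h n‖ := by rw [hTh n]; exact hproj_le n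
      have := h1.trans h2
      rw [ht, ht]
      nlinarith [norm_nonneg (h (n + 1)), norm_nonneg (h n)]
    have ht_anti : Antitone t := antitone_nat_of_succ_le ht_succ
    have ht_nonneg : ∀ n, 0 ≤ t n := fun n => (ht n) ▸ sq_nonneg _
    -- bound on the remainder
    have hb : ∀ n : ℕ, ‖(T ^ (n + 1)) (h (n + 1))‖ ^ 2
        ≤ t (n + 1) + (n + 1 : ℝ) * (t n - t (n + 1)) := by
      intro n
      have h1 := wsp_growth T hconcave (h (n + 1)) (n + 1)
      have h2 : ‖T (h (n + 1))‖ ^ 2 ≤ t n := by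
        have h4 : ‖T (h (n + 1))‖ ≤ ‖h n‖ := by rw [hTh n]; exact hproj_le n
        rw [ht]
        nlinarith [norm_nonneg (T (h (n + 1))), norm_nonneg (h n)]
      have h3 : (0 : ℝ) ≤ (n + 1 : ℝ) := by positivity
      rw [Nat.cast_succ] at h1
      nlinarith [ht (n + 1), ht n, h1, h2, h3]
    -- infinitely many good indices
    have hsum : Summable (fun n => t n - t (n + 1)) := by
      apply summable_of_sum_range_le (c := t 0)
      · intro n; linarith [ht_succ n]
      · intro n
        rw [Finset.sum_range_sub' t n]
        linarith [ht_nonneg n]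
    have hgood : ∀ m : ℕ, ∃ n : ℕ, m ≤ n ∧ (n + 1 : ℝ) * (t n - t (n + 1)) ≤ 1 := by
      by_contra hcon
      push_neg at hcon
      obtain ⟨m, hm⟩ := hcon
      have hcmp : Summable (fun n : ℕ => 1 / ((n + m : ℕ) + 1 : ℝ)) := by
        have hsum' : Summable (fun n : ℕ => t (n + m) - t (n + m + 1)) :=
          (summable_nat_add_iff m).2 hsum
        refine Summable.of_nonneg_of_le (fun n => by positivity) (fun n => ?_) hsum'
        have h1 := hm (n + m) (Nat.le_add_left m n)
        have h2 : (0 : ℝ) < ((n + m : ℕ) : ℝ) + 1 := by positivity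
        rw [div_le_iff₀ h2]
        push_cast at h1 ⊢
        nlinarith
      have hstep : Summable (fun n : ℕ =>
          (fun k : ℕ => 1 / ((k : ℝ) + 1)) (n + m)) := hcmp
      have h6 : Summable (fun n : ℕ => 1 / ((n : ℝ) + 1)) :=
        (summable_nat_add_iff m).1 hstep
      have h7 : Summable (fun n : ℕ =>
          (fun k : ℕ => 1 / (k : ℝ)) (n + 1)) := by
        simp only [Nat.cast_add, Nat.cast_one]
        exact h6
      exact Real.not_summable_one_div_natCast ((summable_nat_add_iff 1).1 h7)
    -- remainders lie in deep ranges
    have hrange : ∀ m n : ℕ, m ≤ n → (T ^ n) (h n) ∈ LinearMap.range ((T ^ m : H →L[ℂ] H) : H →ₗ[ℂ] H) := by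
      intro m n hmn
      refine ⟨(T ^ (n - m)) (h n), ?_⟩
      simp only [ContinuousLinearMap.coe_coe]
      rw [← ContinuousLinearMap.mul_apply, ← pow_add]
      congr 2
      omega
    -- inner product identity
    have hinner : ∀ n : ℕ, (⟪g, (T ^ n) (h n)⟫ : ℂ) = ⟪g, g⟫ := by
      intro n
      have h1 : (⟪g - (T ^ n) (h n), g⟫ : ℂ) = 0 :=
        (Submodule.mem_orthogonal S g).1 hg _ (hdec n)
      have h2 : (⟪g, g - (T ^ n) (h n)⟫ : ℂ) = 0 := by
        rw [← inner_conj_symm, h1, map_zero]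
      rw [inner_sub_right] at h2
      linear_combination -h2
    -- conclude g = 0
    have hkey : ∀ ε : ℝ, 0 < ε → ‖g‖ ^ 2 ≤ ε * Real.sqrt (t 0 + 1) := by
      intro ε hε
      obtain ⟨m, q, hqε, hgq, hqV⟩ :=
        wsp_proj_small (V := fun n => LinearMap.range ((T ^ n : H →L[ℂ] H) : H →ₗ[ℂ] H))
          (wsp_range_closed T hconcave)
          (fun m n hmn => by
            intro x hx
            obtain ⟨y, rfl⟩ := LinearMap.mem_range.1 hx
            exact ⟨(T ^ (n - m)) y, by
              simp only [ContinuousLinearMap.coe_coe]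
              rw [← ContinuousLinearMap.mul_apply, ← pow_add]; congr 2; omega⟩)
          hanalytic g ε hε
      obtain ⟨n, hmn, hng⟩ := hgood m
      set r : H := (T ^ (n + 1)) (h (n + 1)) with hrdef
      have hrV : r ∈ LinearMap.range ((T ^ m : H →L[ℂ] H) : H →ₗ[ℂ] H) := hrange m (n + 1) (hmn.trans (Nat.le_succ n))
      have hrnorm : ‖r‖ ≤ Real.sqrt (t 0 + 1) := by
        have h1 := hb n
        have h2 : t (n + 1) ≤ t 0 := ht_anti (Nat.zero_le _)
        have h3 : ‖r‖ ^ 2 ≤ t 0 + 1 := by nlinarith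
        have := Real.sqrt_le_sqrt h3
        rwa [Real.sqrt_sq (norm_nonneg r)] at this
      -- ⟪g, r⟫ = ⟪q, r⟫
      have hsplit : (⟪g, r⟫ : ℂ) = ⟪q, r⟫ := by
        have h0 : (⟪r, g - q⟫ : ℂ) = 0 :=
          (Submodule.mem_orthogonal _ _).1 hgq r hrV
        have h1 : (⟪g - q, r⟫ : ℂ) = 0 := by
          rw [← inner_conj_symm, h0, map_zero]
        rw [inner_sub_left] at h1
        linear_combination h1
      have hre : ‖g‖ ^ 2 = RCLike.re (⟪g, r⟫ : ℂ) := by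
        rw [hinner (n + 1)]
        exact (inner_self_eq_norm_sq g).symm
      calc ‖g‖ ^ 2 = RCLike.re (⟪g, r⟫ : ℂ) := hre
        _ ≤ ‖(⟪g, r⟫ : ℂ)‖ := RCLike.re_le_norm _
        _ = ‖(⟪q, r⟫ : ℂ)‖ := by rw [hsplit]
        _ ≤ ‖q‖ * ‖r‖ := norm_inner_le_norm q r
        _ ≤ ε * Real.sqrt (t 0 + 1) := by
            apply mul_le_mul hqε.le hrnorm (norm_nonneg r) hε.le
    have hg0 : ‖g‖ ^ 2 ≤ 0 := by
      by_contra hpos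
      push_neg at hpos
      set C := Real.sqrt (t 0 + 1) with hC
      have hC0 : 0 ≤ C := Real.sqrt_nonneg _
      have hε : 0 < ‖g‖ ^ 2 / (C + 1) := by positivity
      have h1 := hkey _ hε
      have h2 : ‖g‖ ^ 2 / (C + 1) * (C + 1) = ‖g‖ ^ 2 :=
        div_mul_cancel₀ _ (by positivity)
      have h3 : ‖g‖ ^ 2 / (C + 1) * (C + 1)
          = ‖g‖ ^ 2 / (C + 1) * C + ‖g‖ ^ 2 / (C + 1) := by ring
      linarith [hε, h1, h2, h3]
    have h4 : ‖g‖ ^ 2 = 0 := le_antisymm hg0 (sq_nonneg _)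
    exact norm_eq_zero.1 (sq_eq_zero_iff.1 h4)
end

section
/- Wold decomposition for a 2-isometry: let T be a 2-isometry on a complex Hilbert space H, let H₀ := ⋂_{n≥0} Tⁿ(H) and let H₁ be the closed linear span of ⋃_{n≥0} Tⁿ(ker T*). Then H₁ = H₀ᗮ, so H = H₀ ⊕ H₁ orthogonally; both H₀ and H₁ reduce T; the restriction T|_{H₀} is unitary; and the restriction T|_{H₁} is an analytic 2-isometry, i.e. ⋂_{n≥0} Tⁿ(H₁) = {0}. Moreover the decomposition is unique: if H = K₀ ⊕ K₁ orthogonally with K₀ and K₁ both T-reducing, T|_{K₀} unitary and T|_{K₁} analytic, then K₀ = H₀ and K₁ = H₁. -/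
open ContinuousLinearMap
open scoped ComplexInnerProductSpace

set_option linter.unusedSectionVars false
set_option maxHeartbeats 1000000

namespace WoldTwoIsometry

variable {H : Type*} [NormedAddCommGroup H] [InnerProductSpace ℂ H] [CompleteSpace H]

/-- The defect `‖Th‖² - ‖h‖²`. -/
noncomputable def sig (T : H →L[ℂ] H) (h : H) : ℝ := ‖T h‖ ^ 2 - ‖h‖ ^ 2

variable (T : H →L[ℂ] H)

theorem pow_apply_succ (n : ℕ) (h : H) : (T ^ (n+1)) h = T ((T ^ n) h) := by
  rw [pow_succ']; rfl

theorem pow_apply_succ2 (n : ℕ) (h : H) : (T ^ (n+1)) h = (T ^ n) (T h) := by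
  rw [pow_succ]; rfl

theorem inner_pow_shift (n : ℕ) (u v : H) :
    (inner ℂ ((T ^ n) u) v : ℂ) = inner ℂ u (((adjoint T) ^ n) v) := by
  induction n generalizing u with
  | zero => simp
  | succ n ih =>
      rw [pow_apply_succ2, ih (T u), ← ContinuousLinearMap.adjoint_inner_right,
        ← pow_apply_succ]

variable (h2 : ∀ h : H, ‖T (T h)‖ ^ 2 - 2 * ‖T h‖ ^ 2 + ‖h‖ ^ 2 = 0)
include h2

theorem sig_T (h : H) : sig T (T h) = sig T h := by
  have := h2 h; simp only [sig]; nlinarith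

theorem sig_pow (n : ℕ) (h : H) : sig T ((T ^ n) h) = sig T h := by
  induction n with
  | zero => simp
  | succ n ih => rw [pow_apply_succ, sig_T T h2, ih]

theorem norm_pow_sq (n : ℕ) (h : H) :
    ‖(T ^ n) h‖ ^ 2 = ‖h‖ ^ 2 + (n : ℝ) * sig T h := by
  induction n with
  | zero => simp
  | succ n ih =>
      have h1 : sig T ((T ^ n) h) = sig T h := sig_pow T h2 n h
      rw [pow_apply_succ]
      have h3 : ‖T ((T^n) h)‖ ^ 2 - ‖(T^n) h‖^2 = sig T h := by
        rw [← h1]; rfl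
      rw [Nat.cast_succ]
      nlinarith [ih]

theorem sig_nonneg (h : H) : 0 ≤ sig T h := by
  by_contra hneg
  push_neg at hneg
  obtain ⟨n, hn⟩ := exists_nat_gt (‖h‖ ^ 2 / (-sig T h))
  have h0 : 0 ≤ ‖(T ^ n) h‖ ^ 2 := sq_nonneg _
  rw [norm_pow_sq T h2] at h0
  have hpos : 0 < -sig T h := by linarith
  rw [div_lt_iff₀ hpos] at hn
  nlinarith

theorem norm_le_pow (n : ℕ) (h : H) : ‖h‖ ≤ ‖(T ^ n) h‖ := by
  have h0 := norm_pow_sq T h2 n h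
  have h1 := sig_nonneg T h2 h
  have h3 : ‖h‖ ^ 2 ≤ ‖(T^n) h‖ ^ 2 := by nlinarith [Nat.cast_nonneg (α := ℝ) n]
  exact le_of_pow_le_pow_left₀ two_ne_zero (norm_nonneg _) h3

theorem norm_le_T (h : H) : ‖h‖ ≤ ‖T h‖ := by
  have := norm_le_pow T h2 1 h
  simpa using this

theorem isClosed_range_pow (n : ℕ) :
    IsClosed ((LinearMap.range ((T ^ n : H →L[ℂ] H) : H →ₗ[ℂ] H) : Submodule ℂ H) : Set H) := by
  have hanti : AntilipschitzWith 1 (⇑(T ^ n)) :=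
    ContinuousLinearMap.antilipschitz_of_bound (T ^ n) (fun x => by
      simpa using norm_le_pow T h2 n x)
  have := hanti.isClosed_range (T ^ n).uniformContinuous
  rw [LinearMap.coe_range]; exact this

theorem T_injective : Function.Injective T := by
  intro a b hab
  have h1 : ‖a - b‖ ≤ ‖T (a - b)‖ := norm_le_T T h2 _
  rw [map_sub, hab, sub_self, norm_zero] at h1
  have h2' : ‖a - b‖ = 0 := le_antisymm h1 (norm_nonneg _)
  exact sub_eq_zero.mp (norm_eq_zero.mp h2')

theorem inner_eq_of_sig_zero (x : H) (hx : sig T x = 0) (y : H) :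
    (inner ℂ (T x) (T y) : ℂ) = inner ℂ x y := by
  have sig_nonneg' := sig_nonneg T h2
  set d : ℂ := inner ℂ (T x) (T y) - inner ℂ x y with hd
  suffices hdz : d = 0 by
    have := sub_eq_zero.mp hdz; exact this
  by_contra hdz
  have key : ∀ z : ℂ, 0 ≤ 2 * (z * d).re + ‖z‖ ^ 2 * sig T y := by
    intro z
    have h0 : 0 ≤ sig T (x + z • y) := sig_nonneg' _
    have e1 : ‖T (x + z • y)‖ ^ 2
        = ‖T x‖ ^ 2 + 2 * (z * (inner ℂ (T x) (T y) : ℂ)).re + ‖z‖ ^ 2 * ‖T y‖ ^ 2 := by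
      rw [map_add, map_smul]
      rw [norm_add_sq (𝕜 := ℂ)]
      rw [inner_smul_right, norm_smul]
      simp [mul_pow]
    have e2 : ‖x + z • y‖ ^ 2
        = ‖x‖ ^ 2 + 2 * (z * (inner ℂ x y : ℂ)).re + ‖z‖ ^ 2 * ‖y‖ ^ 2 := by
      rw [norm_add_sq (𝕜 := ℂ), inner_smul_right, norm_smul]
      simp [mul_pow]
    have e3 : (z * d).re = (z * (inner ℂ (T x) (T y) : ℂ)).re - (z * (inner ℂ x y : ℂ)).re := by
      rw [hd, mul_sub, Complex.sub_re]
    simp only [sig] at h0 hx ⊢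
    rw [e1, e2] at h0
    rw [e3]
    nlinarith
  set t : ℝ := 1 / (sig T y + 1) with ht
  have hy0 : 0 ≤ sig T y := sig_nonneg' y
  have ht0 : 0 < t := by positivity
  have htle : t * sig T y < 2 := by
    rw [ht, div_mul_eq_mul_div, div_lt_iff₀ (by linarith)]
    nlinarith
  have hdn : 0 < ‖d‖ := norm_pos_iff.mpr hdz
  have hkey := key (-(t : ℂ) * (starRingEnd ℂ) d)
  have e4 : ((-(t : ℂ) * (starRingEnd ℂ) d) * d).re = -t * ‖d‖ ^ 2 := by
    have ha : (starRingEnd ℂ) d * d = ((Complex.normSq d : ℝ) : ℂ) := by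
      rw [mul_comm, Complex.mul_conj]
    have hb : Complex.normSq d = ‖d‖ ^ 2 := by
      rw [Complex.normSq_eq_norm_sq]
    have hc : (-(t : ℂ)) * ((Complex.normSq d : ℝ) : ℂ)
        = ((-t * Complex.normSq d : ℝ) : ℂ) := by push_cast; ring
    rw [mul_assoc, ha, hc, Complex.ofReal_re, hb]
  have e5 : ‖-(t : ℂ) * (starRingEnd ℂ) d‖ = t * ‖d‖ := by
    rw [norm_mul]
    simp [abs_of_pos ht0]
  rw [e4, e5] at hkey
  have hq : 0 < t * ‖d‖ ^ 2 := by positivity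
  nlinarith [mul_lt_mul_of_pos_left htle hq]

theorem adjoint_T_T (x : H) (hx : sig T x = 0) : adjoint T (T x) = x := by
  apply ext_inner_right ℂ
  intro v
  rw [adjoint_inner_left]
  exact inner_eq_of_sig_zero T h2 x hx v

theorem sig_zero_of_forall_range (x : H) (hx : ∀ n : ℕ, ∃ y, (T ^ n) y = x) :
    sig T x = 0 := by
  have hb : ∀ n : ℕ, (n : ℝ) * sig T x ≤ ‖x‖ ^ 2 := by
    intro n
    obtain ⟨y, hy⟩ := hx n
    have h1 : sig T y = sig T x := by rw [← hy, sig_pow T h2]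
    have hsq : ‖(T ^ n) y‖ ^ 2 = ‖y‖ ^ 2 + (n : ℝ) * sig T y := norm_pow_sq T h2 n y
    rw [hy] at hsq
    nlinarith [sq_nonneg ‖y‖]
  have hnn := sig_nonneg T h2 x
  rcases eq_or_lt_of_le hnn with h | h
  · exact h.symm
  · obtain ⟨n, hn⟩ := exists_nat_gt (‖x‖ ^ 2 / sig T x)
    have := hb n
    rw [div_lt_iff₀ h] at hn
    linarith

theorem exists_preimage_mem (x : H) (hx : ∀ n : ℕ, ∃ y, (T ^ n) y = x) :
    ∃ y, (∀ n : ℕ, ∃ z, (T ^ n) z = y) ∧ T y = x := by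
  obtain ⟨y, hy⟩ := hx 1
  rw [pow_one] at hy
  refine ⟨y, fun n => ?_, hy⟩
  obtain ⟨z, hz⟩ := hx (n + 1)
  refine ⟨z, T_injective T h2 ?_⟩
  rw [hy, ← hz, pow_apply_succ]

/-- The wandering subspace span. -/
noncomputable abbrev WS : Submodule ℂ H :=
  ⨆ n : ℕ, (LinearMap.ker ((adjoint T : H →L[ℂ] H) : H →ₗ[ℂ] H)).map ((T ^ n : H →L[ℂ] H) : H →ₗ[ℂ] H)

theorem main_orth_mem_range (x : H)
    (hx : ∀ w ∈ WS T, (inner ℂ w x : ℂ) = 0) (m : ℕ) :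
    x ∈ LinearMap.range ((T ^ m : H →L[ℂ] H) : H →ₗ[ℂ] H) := by
  classical
  set RT : Submodule ℂ H := LinearMap.range (T : H →ₗ[ℂ] H) with hRT
  have hRTclosed : IsClosed (RT : Set H) := by
    have := isClosed_range_pow T h2 1
    simpa using this
  haveI : CompleteSpace RT := hRTclosed.completeSpace_coe
  set P : H → H := fun y => ((RT.orthogonalProjectionOnto y : RT) : H) with hP
  have hPmem : ∀ y, P y ∈ RT := fun y => (RT.orthogonalProjectionOnto y).2
  have hPorth : ∀ y, y - P y ∈ RTᗮ := fun y => Submodule.sub_starProjection_mem_orthogonal (K := RT) y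
  have hPnorm : ∀ y, ‖P y‖ ^ 2 + ‖y - P y‖ ^ 2 = ‖y‖ ^ 2 := by
    intro y
    have h0 : (inner ℂ (P y) (y - P y) : ℂ) = 0 :=
      (Submodule.mem_orthogonal RT (y - P y)).mp (hPorth y) _ (hPmem y)
    have e : P y + (y - P y) = y := by abel
    have hns := norm_add_sq (𝕜 := ℂ) (P y) (y - P y)
    rw [e, h0] at hns
    simp at hns
    linarith
  have hPle : ∀ y, ‖P y‖ ≤ ‖y‖ := by
    intro y
    have := hPnorm y
    have h1 : ‖P y‖ ^ 2 ≤ ‖y‖ ^ 2 := by nlinarith [sq_nonneg ‖y - P y‖]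
    exact le_of_pow_le_pow_left₀ two_ne_zero (norm_nonneg _) h1
  have hRex : ∀ y : H, ∃ z, T z = P y := fun y => LinearMap.mem_range.mp (hPmem y)
  set R : H → H := fun y => Classical.choose (hRex y) with hR
  have hRspec : ∀ y, T (R y) = P y := fun y => Classical.choose_spec (hRex y)
  set y : ℕ → H := fun n => R^[n] x with hy
  have hy0 : y 0 = x := rfl
  have hysucc : ∀ n, y (n + 1) = R (y n) := by
    intro n; simp only [hy, Function.iterate_succ_apply']
  have hker : ∀ v ∈ RTᗮ, v ∈ LinearMap.ker ((adjoint T : H →L[ℂ] H) : H →ₗ[ℂ] H) := by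
    intro v hv
    rw [LinearMap.mem_ker, ContinuousLinearMap.coe_coe]
    apply ext_inner_left ℂ
    intro u
    rw [adjoint_inner_right]
    rw [inner_zero_right]
    exact (Submodule.mem_orthogonal RT v).mp hv _ (LinearMap.mem_range_self (T : H →ₗ[ℂ] H) u)
  have hdmem : ∀ n, x - (T ^ n) (y n) ∈ WS T := by
    intro n
    induction n with
    | zero => simp [hy0]
    | succ n ih =>
        have e1 : (T ^ (n+1)) (y (n+1)) = (T ^ n) (T (y (n+1))) := by
          rw [pow_succ]; rfl
        have e2 : T (y (n+1)) = P (y n) := by rw [hysucc, hRspec]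
        have e3 : x - (T ^ (n+1)) (y (n+1))
            = (x - (T ^ n) (y n)) + (T ^ n) (y n - P (y n)) := by
          rw [e1, e2, map_sub]; abel
        rw [e3]
        refine Submodule.add_mem _ ih ?_
        have : (T ^ n) (y n - P (y n)) ∈ (LinearMap.ker ((adjoint T : H →L[ℂ] H) : H →ₗ[ℂ] H)).map ((T ^ n : H →L[ℂ] H) : H →ₗ[ℂ] H) :=
          Submodule.mem_map_of_mem (hker _ (hPorth (y n)))
        exact (le_iSup (fun n => (LinearMap.ker ((adjoint T : H →L[ℂ] H) : H →ₗ[ℂ] H)).map ((T ^ n : H →L[ℂ] H) : H →ₗ[ℂ] H)) n) this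
  have hnrm : ∀ n, ‖x - (T ^ n) (y n)‖ ^ 2 = ‖(T ^ n) (y n)‖ ^ 2 - ‖x‖ ^ 2 := by
    intro n
    set z := (T ^ n) (y n) with hz
    have h0 : (inner ℂ (x - z) x : ℂ) = 0 := by
      have := hx _ (hdmem n)
      rw [← this]
    have h1 : (inner ℂ z x : ℂ) = (‖x‖ : ℂ) ^ 2 := by
      have h0' := h0
      rw [inner_sub_left, sub_eq_zero] at h0'
      rw [← h0', inner_self_eq_norm_sq_to_K]
      norm_num
    have h2' : RCLike.re (inner ℂ x z : ℂ) = ‖x‖ ^ 2 := by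
      have hc : (inner ℂ x z : ℂ) = starRingEnd ℂ (inner ℂ z x) := (inner_conj_symm _ _).symm
      rw [hc, h1]
      simp [← Complex.ofReal_pow]
    have hns := norm_sub_sq (𝕜 := ℂ) x z
    rw [h2'] at hns
    rw [hns]; ring
  have hctr : ∀ n, ‖y (n+1)‖ ≤ ‖y n‖ := by
    intro n
    have h1 : ‖y (n+1)‖ ≤ ‖T (y (n+1))‖ := norm_le_T T h2 _
    have h2' : T (y (n+1)) = P (y n) := by rw [hysucc, hRspec]
    rw [h2'] at h1
    exact h1.trans (hPle _)
  have hbnd : ∀ n, ‖y n‖ ≤ ‖x‖ := by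
    intro n
    induction n with
    | zero => simp [hy0]
    | succ n ih => exact (hctr n).trans ih
  have htel : ∀ n, sig T (y (n+1)) ≤ ‖y n‖ ^ 2 - ‖y (n+1)‖ ^ 2 := by
    intro n
    have h2' : T (y (n+1)) = P (y n) := by rw [hysucc, hRspec]
    have h3 : ‖P (y n)‖ ≤ ‖y n‖ := hPle _
    simp only [sig, h2']
    nlinarith [norm_nonneg (P (y n)), norm_nonneg (y n)]
  have hsum : ∀ N, ∑ i ∈ Finset.range N, sig T (y (i+1)) ≤ ‖x‖ ^ 2 := by
    intro N
    have key : ∀ N, ∑ i ∈ Finset.range N, sig T (y (i+1)) ≤ ‖y 0‖ ^ 2 - ‖y N‖ ^ 2 := by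
      intro N
      induction N with
      | zero => simp
      | succ N ih =>
          rw [Finset.sum_range_succ]
          have := htel N
          linarith
    have := key N
    have h5 : ‖y 0‖ = ‖x‖ := by rw [hy0]
    nlinarith [sq_nonneg ‖y N‖, hbnd N, norm_nonneg (y N), norm_nonneg x]
  have hsmall : ∀ ε : ℝ, 0 < ε → ∀ m : ℕ, ∃ n, m ≤ n ∧ (n : ℝ) * sig T (y n) < ε := by
    intro ε hε m
    by_contra hcon
    push_neg at hcon
    have hsummable : Summable (fun n => sig T (y n)) := by
      apply summable_of_sum_range_le (fun n => sig_nonneg T h2 _)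
      intro n
      calc ∑ i ∈ Finset.range n, sig T (y i)
          ≤ ∑ i ∈ Finset.range (n+1), sig T (y i) := by
            rw [Finset.sum_range_succ]; linarith [sig_nonneg T h2 (y n)]
        _ = sig T (y 0) + ∑ i ∈ Finset.range n, sig T (y (i+1)) := by
            rw [Finset.sum_range_succ']; ring
        _ ≤ sig T (y 0) + ‖x‖ ^ 2 := by linarith [hsum n]
    have hshift : Summable (fun n => sig T (y (n + m + 1))) := by
      have := (summable_nat_add_iff (f := fun n => sig T (y n)) (m + 1)).mpr hsummable
      simpa [add_assoc] using this
    have hcomp : Summable (fun n : ℕ => ε * (1 / ((n : ℝ) + m + 1))) := by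
      apply Summable.of_nonneg_of_le (fun n => by positivity) _ hshift
      intro n
      have h6 := hcon (n + m + 1) (by omega)
      have h7 : (0:ℝ) < (n : ℝ) + m + 1 := by positivity
      push_cast at h6
      have h8 : ε / ((n:ℝ) + m + 1) ≤ sig T (y (n + m + 1)) := by
        rw [div_le_iff₀ h7]
        nlinarith [h6]
      calc ε * (1 / ((n:ℝ) + m + 1)) = ε / ((n:ℝ) + m + 1) := by ring
        _ ≤ sig T (y (n + m + 1)) := h8
    have hharmonic : Summable (fun n : ℕ => 1 / ((n : ℝ) + m + 1)) := by
      have := hcomp.mul_left (1 / ε)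
      convert this using 2 with n
      · exact rfl
      field_simp
    have hsum1 : Summable (fun n : ℕ => 1 / ((n : ℝ) + 1)) := by
      have := (summable_nat_add_iff (f := fun n : ℕ => 1 / ((n : ℝ) + 1)) m).mp ?_
      · exact this
      · convert hharmonic using 2 with n
        · exact rfl
        push_cast; ring
    have hnot : ¬ Summable (fun n : ℕ => 1 / ((n : ℝ) + 1)) := by
      intro hsummable2
      apply Real.not_summable_one_div_natCast
      have := (summable_nat_add_iff (f := fun n : ℕ => 1 / (n : ℝ)) 1).mp ?_
      · exact this
      · convert hsummable2 using 2 with n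
        · exact rfl
        push_cast; ring
    exact hnot hsum1
  have hclosed := isClosed_range_pow T h2 m
  rw [← SetLike.mem_coe, ← hclosed.closure_eq]
  rw [Metric.mem_closure_iff]
  intro ε hε
  obtain ⟨n, hnm, hn⟩ := hsmall (ε ^ 2) (by positivity) m
  refine ⟨(T ^ n) (y n), ?_, ?_⟩
  · have : (T ^ n) (y n) ∈ LinearMap.range ((T ^ m : H →L[ℂ] H) : H →ₗ[ℂ] H) := by
      refine ⟨(T ^ (n - m)) (y n), ?_⟩
      rw [ContinuousLinearMap.coe_coe, ← ContinuousLinearMap.mul_apply, ← pow_add]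
      congr 2
      omega
    exact this
  · rw [dist_eq_norm]
    have hr1 := hnrm n
    have hr2 := norm_pow_sq T h2 n (y n)
    have hr3 := hbnd n
    have hr4 : ‖x - (T ^ n) (y n)‖ ^ 2 < ε ^ 2 := by
      nlinarith [norm_nonneg (y n), norm_nonneg x]
    exact lt_of_pow_lt_pow_left₀ 2 (le_of_lt hε) hr4

end WoldTwoIsometry

open WoldTwoIsometry

/-- **Wold decomposition for a 2-isometry.**
With `H₀ = ⋂ₙ Tⁿ(H)` and `H₁` the closed span of `⋃ₙ Tⁿ(ker T*)`, one has
`H₁ = H₀ᗮ`, both subspaces reduce `T`, `T|H₀` is unitary, `T|H₁` is an analytic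
2-isometry, and the decomposition is unique. -/
theorem twoIsometry_wold_decomposition
    {H : Type*} [NormedAddCommGroup H] [InnerProductSpace ℂ H] [CompleteSpace H]
    (T : H →L[ℂ] H)
    (h2iso : ∀ h : H, ‖T (T h)‖ ^ 2 - 2 * ‖T h‖ ^ 2 + ‖h‖ ^ 2 = 0) :
    ∀ H₀ H₁ : Submodule ℂ H,
      H₀ = (⨅ n : ℕ, LinearMap.range ((T ^ n : H →L[ℂ] H) : H →ₗ[ℂ] H)) →
      H₁ = (⨆ n : ℕ, (LinearMap.ker ((adjoint T : H →L[ℂ] H) : H →ₗ[ℂ] H)).map ((T ^ n : H →L[ℂ] H) : H →ₗ[ℂ] H)).topologicalClosure →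
      H₁ = H₀ᗮ ∧
      (∀ x ∈ H₀, T x ∈ H₀) ∧ (∀ x ∈ H₀, adjoint T x ∈ H₀) ∧
      (∀ x ∈ H₁, T x ∈ H₁) ∧ (∀ x ∈ H₁, adjoint T x ∈ H₁) ∧
      (∀ x ∈ H₀, ‖T x‖ = ‖x‖) ∧ H₀.map (T : H →ₗ[ℂ] H) = H₀ ∧
      (⨅ n : ℕ, H₁.map ((T ^ n : H →L[ℂ] H) : H →ₗ[ℂ] H)) = ⊥ ∧
      (∀ K₀ K₁ : Submodule ℂ H, IsClosed (K₀ : Set H) → IsClosed (K₁ : Set H) →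
        (∀ x ∈ K₀, ∀ y ∈ K₁, ⟪x, y⟫ = 0) → K₀ ⊔ K₁ = ⊤ →
        (∀ x ∈ K₀, T x ∈ K₀) → (∀ x ∈ K₀, adjoint T x ∈ K₀) →
        (∀ x ∈ K₁, T x ∈ K₁) → (∀ x ∈ K₁, adjoint T x ∈ K₁) →
        (∀ x ∈ K₀, ‖T x‖ = ‖x‖) → K₀.map (T : H →ₗ[ℂ] H) = K₀ →
        (⨅ n : ℕ, K₁.map ((T ^ n : H →L[ℂ] H) : H →ₗ[ℂ] H)) = ⊥ →
        K₀ = H₀ ∧ K₁ = H₁) := by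
  intro H₀ H₁ hH0 hH1
  -- membership characterization of H₀
  have memH0 : ∀ x : H, x ∈ H₀ ↔ ∀ n : ℕ, ∃ y, (T ^ n) y = x := by
    intro x
    rw [hH0, Submodule.mem_iInf]
    exact forall_congr' fun n => LinearMap.mem_range
  have hsig0 : ∀ x ∈ H₀, sig T x = 0 := fun x hx =>
    sig_zero_of_forall_range T h2iso x ((memH0 x).mp hx)
  have hTmem : ∀ x ∈ H₀, T x ∈ H₀ := by
    intro x hx
    rw [memH0] at hx ⊢
    intro n
    obtain ⟨y, hy⟩ := hx n
    exact ⟨T y, by rw [← pow_apply_succ2, pow_apply_succ, hy]⟩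
  have hpre : ∀ x ∈ H₀, ∃ y, y ∈ H₀ ∧ T y = x := by
    intro x hx
    obtain ⟨y, hy, hTy⟩ := exists_preimage_mem T h2iso x ((memH0 x).mp hx)
    exact ⟨y, (memH0 y).mpr hy, hTy⟩
  have hadj : ∀ x ∈ H₀, adjoint T x ∈ H₀ ∧ T (adjoint T x) = x := by
    intro x hx
    obtain ⟨y, hy, hTy⟩ := hpre x hx
    have he : adjoint T x = y := by
      rw [← hTy]; exact adjoint_T_T T h2iso y (hsig0 y hy)
    rw [he]; exact ⟨hy, hTy⟩
  have hadjiter : ∀ (n : ℕ), ∀ x ∈ H₀, ((adjoint T) ^ n) x ∈ H₀ := by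
    intro n
    induction n with
    | zero => intro x hx; simpa using hx
    | succ n ih =>
        intro x hx
        rw [pow_apply_succ2 (adjoint T) n x]
        exact ih _ (hadj x hx).1
  -- H₁ ≤ H₀ᗮ
  have hWle : WS T ≤ H₀ᗮ := by
    refine iSup_le fun n => ?_
    rw [Submodule.map_le_iff_le_comap]
    intro u hu
    rw [Submodule.mem_comap]
    rw [Submodule.mem_orthogonal]
    intro v hv
    rw [inner_eq_zero_symm]
    rw [ContinuousLinearMap.coe_coe, inner_pow_shift]
    obtain ⟨w, hw, hTw⟩ := hpre _ (hadjiter n v hv)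
    rw [← hTw]
    rw [← ContinuousLinearMap.adjoint_inner_left]
    rw [show adjoint T u = 0 from LinearMap.mem_ker.mp hu]
    exact inner_zero_left _
  have hH1leH0p : H₁ ≤ H₀ᗮ := by
    rw [hH1]
    exact Submodule.topologicalClosure_minimal _ hWle (Submodule.isClosed_orthogonal _)
  -- the hard direction: H₁ᗮ ≤ H₀
  have hmain : H₁ᗮ ≤ H₀ := by
    intro x hx
    rw [hH0, Submodule.mem_iInf]
    intro n
    apply main_orth_mem_range T h2iso x _ n
    intro w hw
    have hwH1 : w ∈ H₁ := by
      rw [hH1]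
      exact Submodule.le_topologicalClosure _ hw
    exact (Submodule.mem_orthogonal H₁ x).mp hx w hwH1
  have hH1closed : IsClosed (H₁ : Set H) := by
    rw [hH1]; exact Submodule.isClosed_topologicalClosure _
  have hH1eq : H₁ = H₀ᗮ := by
    refine le_antisymm hH1leH0p ?_
    have h1 : H₀ᗮ ≤ (H₁ᗮ)ᗮ := Submodule.orthogonal_le hmain
    rwa [Submodule.orthogonal_orthogonal_eq_closure,
      hH1closed.submodule_topologicalClosure_eq] at h1
  -- T-invariance of H₁
  have hWinv : ∀ w ∈ WS T, T w ∈ WS T := by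
    have hle : WS T ≤ (WS T).comap (T : H →ₗ[ℂ] H) := by
      refine iSup_le fun n => ?_
      rw [Submodule.map_le_iff_le_comap]
      intro u hu
      simp only [Submodule.mem_comap]
      have : T ((T ^ n) u) ∈ (LinearMap.ker ((adjoint T : H →L[ℂ] H) : H →ₗ[ℂ] H)).map ((T ^ (n+1) : H →L[ℂ] H) : H →ₗ[ℂ] H) := by
        rw [← pow_apply_succ]
        exact Submodule.mem_map_of_mem hu
      exact (le_iSup (fun k => (LinearMap.ker ((adjoint T : H →L[ℂ] H) : H →ₗ[ℂ] H)).map ((T ^ k : H →L[ℂ] H) : H →ₗ[ℂ] H)) (n+1)) this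
    intro w hw
    exact hle hw
  have hTH1 : ∀ x ∈ H₁, T x ∈ H₁ := by
    intro x hx
    rw [hH1] at hx ⊢
    have hcoe := Submodule.topologicalClosure_coe (WS T)
    have hx' : x ∈ closure ((WS T) : Set H) := by
      rw [← hcoe]; exact hx
    have h1 : T x ∈ closure (⇑T '' ((WS T) : Set H)) :=
      image_closure_subset_closure_image T.continuous ⟨x, hx', rfl⟩
    have himg : ⇑T '' ((WS T) : Set H) ⊆ ((WS T) : Set H) := by
      rintro _ ⟨w, hw, rfl⟩
      exact hWinv w hw
    have h2 : T x ∈ closure ((WS T) : Set H) := closure_mono himg h1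
    show T x ∈ ((WS T).topologicalClosure : Set H)
    rw [hcoe]
    exact h2
  -- adjoint-invariance of H₁
  have hAH1 : ∀ x ∈ H₁, adjoint T x ∈ H₁ := by
    intro x hx
    rw [hH1eq] at hx ⊢
    rw [Submodule.mem_orthogonal]
    intro u hu
    rw [ContinuousLinearMap.adjoint_inner_right]
    exact (Submodule.mem_orthogonal H₀ x).mp hx _ (hTmem u hu)
  -- isometry on H₀
  have hiso : ∀ x ∈ H₀, ‖T x‖ = ‖x‖ := by
    intro x hx
    have := hsig0 x hx
    simp only [sig] at this
    have h1 : ‖T x‖ ^ 2 = ‖x‖ ^ 2 := by linarith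
    nlinarith [norm_nonneg (T x), norm_nonneg x]
  -- H₀.map (T : H →ₗ[ℂ] H) = H₀
  have hmap : H₀.map (T : H →ₗ[ℂ] H) = H₀ := by
    apply le_antisymm
    · rw [Submodule.map_le_iff_le_comap]
      intro x hx
      exact hTmem x hx
    · intro x hx
      obtain ⟨y, hy, hTy⟩ := hpre x hx
      exact ⟨y, hy, hTy⟩
  -- analyticity of H₁
  have hanal : (⨅ n : ℕ, H₁.map ((T ^ n : H →L[ℂ] H) : H →ₗ[ℂ] H)) = ⊥ := by
    rw [eq_bot_iff]
    intro x hx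
    rw [Submodule.mem_iInf] at hx
    have hx1 : x ∈ H₁ := by
      have := hx 0
      obtain ⟨z, hz, hzx⟩ := this
      rw [pow_zero] at hzx
      simpa [← hzx] using hz
    have hx0 : x ∈ H₀ := by
      rw [hH0, Submodule.mem_iInf]
      intro n
      obtain ⟨z, hz, hzx⟩ := hx n
      exact ⟨z, hzx⟩
    have hperp : x ∈ H₀ᗮ := hH1eq ▸ hx1
    have hz : (inner ℂ x x : ℂ) = 0 := (Submodule.mem_orthogonal H₀ x).mp hperp x hx0
    rw [Submodule.mem_bot]
    exact inner_self_eq_zero.mp hz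
  refine ⟨hH1eq, hTmem, fun x hx => (hadj x hx).1, hTH1, hAH1, hiso, hmap, hanal, ?_⟩
  -- uniqueness
  intro K₀ K₁ hK0c hK1c horth hsup hTK0 hAK0 hTK1 hAK1 hisoK0 hmapK0 hbotK1
  -- K₁ = K₀ᗮ
  have hK1eq : K₁ = K₀ᗮ := by
    apply le_antisymm
    · intro y hy
      rw [Submodule.mem_orthogonal]
      intro u hu
      exact horth u hu y hy
    · intro x hx
      have hxtop : x ∈ K₀ ⊔ K₁ := by rw [hsup]; exact Submodule.mem_top
      obtain ⟨a, ha, b, hb, hab⟩ := Submodule.mem_sup.mp hxtop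
      have h1 : (inner ℂ a x : ℂ) = 0 := (Submodule.mem_orthogonal K₀ x).mp hx a ha
      have h2 : (inner ℂ a b : ℂ) = 0 := horth a ha b hb
      have h3 : (inner ℂ a a : ℂ) = 0 := by
        have : (inner ℂ a (a + b) : ℂ) = inner ℂ a a + inner ℂ a b := inner_add_right _ _ _
        rw [hab] at this
        rw [h1, h2] at this
        linear_combination -this
      have ha0 : a = 0 := inner_self_eq_zero.mp h3
      rw [← hab, ha0, zero_add]
      exact hb
  -- K₀ ≤ H₀
  have hK0H0aux : ∀ n : ℕ, ∀ x ∈ K₀, ∃ w ∈ K₀, (T ^ n) w = x := by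
    intro n
    induction n with
    | zero => intro x hx; exact ⟨x, hx, by simp⟩
    | succ n ih =>
        intro x hx
        have hx' : x ∈ K₀.map (T : H →ₗ[ℂ] H) := by rw [hmapK0]; exact hx
        obtain ⟨z, hz, hzx⟩ := hx'
        obtain ⟨w, hw, hwz⟩ := ih z hz
        exact ⟨w, hw, by rw [pow_apply_succ, hwz]; exact hzx⟩
  have hK0H0 : K₀ ≤ H₀ := by
    intro x hx
    rw [memH0]
    intro n
    obtain ⟨w, _, hw⟩ := hK0H0aux n x hx
    exact ⟨w, hw⟩
  -- ker T* ≤ K₁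
  have hEK1 : ∀ u ∈ LinearMap.ker ((adjoint T : H →L[ℂ] H) : H →ₗ[ℂ] H), u ∈ K₁ := by
    intro u hu
    rw [hK1eq, Submodule.mem_orthogonal]
    intro w hw
    have hw' : w ∈ K₀.map (T : H →ₗ[ℂ] H) := by rw [hmapK0]; exact hw
    obtain ⟨z, hz, hzw⟩ := hw'
    rw [← hzw, ContinuousLinearMap.coe_coe, ← ContinuousLinearMap.adjoint_inner_right, show adjoint T u = 0 from LinearMap.mem_ker.mp hu]
    exact inner_zero_right _
  -- H₁ ≤ K₁
  have hTK1iter : ∀ (n : ℕ), ∀ v ∈ K₁, (T ^ n) v ∈ K₁ := by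
    intro n
    induction n with
    | zero => intro v hv; simpa using hv
    | succ n ih =>
        intro v hv
        rw [pow_apply_succ]
        exact hTK1 _ (ih v hv)
  have hH1K1 : H₁ ≤ K₁ := by
    rw [hH1]
    refine Submodule.topologicalClosure_minimal _ (iSup_le fun n => ?_) hK1c
    rw [Submodule.map_le_iff_le_comap]
    intro u hu
    exact hTK1iter n u (hEK1 u hu)
  -- H₀ ∩ K₁ = 0
  have hH0K1 : ∀ z, z ∈ H₀ → z ∈ K₁ → z = 0 := by
    intro z hz0 hz1
    have hQ : ∀ n : ℕ, ∃ w, w ∈ H₀ ∧ w ∈ K₁ ∧ (T ^ n) w = z := by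
      intro n
      induction n with
      | zero => exact ⟨z, hz0, hz1, by simp⟩
      | succ n ih =>
          obtain ⟨w, hwH, hwK, hwz⟩ := ih
          refine ⟨adjoint T w, (hadj w hwH).1, hAK1 w hwK, ?_⟩
          rw [pow_apply_succ2, (hadj w hwH).2, hwz]
    have : z ∈ (⨅ n : ℕ, K₁.map ((T ^ n : H →L[ℂ] H) : H →ₗ[ℂ] H)) := by
      rw [Submodule.mem_iInf]
      intro n
      obtain ⟨w, hwH, hwK, hwz⟩ := hQ n
      exact ⟨w, hwK, hwz⟩
    rw [hbotK1] at this
    exact Submodule.mem_bot ℂ |>.mp this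
  -- H₀ ≤ K₀
  have hH0K0 : H₀ ≤ K₀ := by
    intro x hx
    have hxtop : x ∈ K₀ ⊔ K₁ := by rw [hsup]; exact Submodule.mem_top
    obtain ⟨a, ha, b, hb, hab⟩ := Submodule.mem_sup.mp hxtop
    have hbH0 : b ∈ H₀ := by
      have haH0 : a ∈ H₀ := hK0H0 ha
      have : b = x - a := by rw [← hab]; abel
      rw [this]
      exact Submodule.sub_mem _ hx haH0
    have hb0 : b = 0 := hH0K1 b hbH0 hb
    rw [← hab, hb0, add_zero]
    exact ha
  have hK0fin : K₀ = H₀ := le_antisymm hK0H0 hH0K0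
  refine ⟨hK0fin, ?_⟩
  rw [hK1eq, hK0fin, ← hH1eq]
end

section
/- Let S be an analytic 2-isometry on a complex Hilbert space H. With L_S := (S*S)⁻¹S*, P_S := I − S∘L_S, and D_S := (S*S − I)^{1/2} the positive square root, for every x ∈ H one has ‖x‖² = Σ_{k=0}^∞ ‖P_S L_S^k x‖² + Σ_{k=1}^∞ ‖D_S L_S^k x‖², both series converging. -/
open ContinuousLinearMap RCLike Filter

section AuxRichter

variable {H : Type*} [NormedAddCommGroup H] [InnerProductSpace ℂ H] [CompleteSpace H]

local notation "⟪" a ", " b "⟫" => @inner ℂ _ _ a b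

private lemma aux_sq_le {a b : ℝ} (ha : 0 ≤ a) (hb : 0 ≤ b) (h : a ^ 2 ≤ b ^ 2) : a ≤ b := by
  nlinarith

/-- Cauchy–Schwarz-type bound for a positive operator. -/
private lemma aux_pos_cs (R : H →L[ℂ] H) (hsa : IsSelfAdjoint R)
    (hpos : ∀ v : H, 0 ≤ re ⟪R v, v⟫) (C : ℝ) (hC0 : 0 ≤ C)
    (hC : ∀ v : H, ‖R v‖ ≤ C * ‖v‖) (v : H) : ‖R v‖ ^ 2 ≤ C * re ⟪R v, v⟫ := by
  have hadj : ContinuousLinearMap.adjoint R = R := hsa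
  have e1 : ⟪R (R v), v⟫ = ⟪R v, R v⟫ := by
    have h := adjoint_inner_left R v (R v)
    rwa [hadj] at h
  have key : ∀ t : ℝ, 0 ≤ re ⟪R (R v), R v⟫ * (t * t) + (2 * ‖R v‖ ^ 2) * t
      + re ⟪R v, v⟫ := by
    intro t
    have h0 : 0 ≤ re ⟪R (v + (t : ℂ) • R v), v + (t : ℂ) • R v⟫ := hpos _
    have hexp : R (v + (t : ℂ) • R v) = R v + (t : ℂ) • R (R v) := by
      rw [map_add, map_smul]
    have hre_mul : ∀ (s : ℝ) (z : ℂ), re ((s : ℂ) * z) = s * re z := fun s z => by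
      simp [Complex.mul_re]
    rw [hexp, inner_add_left, inner_add_right, inner_add_right, inner_smul_left,
      inner_smul_right, inner_smul_left, inner_smul_right, e1, Complex.conj_ofReal] at h0
    simp only [map_add, hre_mul] at h0
    have hre : re ⟪R v, R v⟫ = ‖R v‖ ^ 2 := inner_self_eq_norm_sq _
    rw [hre] at h0
    nlinarith [h0]
  have hdisc := discrim_le_zero key
  rw [discrim] at hdisc
  -- hdisc : (2 * ‖R v‖ ^ 2) ^ 2 - 4 * re ⟪R (R v), R v⟫ * re ⟪R v, v⟫ ≤ 0
  have hcc : re ⟪R (R v), R v⟫ ≤ C * ‖R v‖ ^ 2 := by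
    calc re ⟪R (R v), R v⟫ ≤ ‖(⟪R (R v), R v⟫ : ℂ)‖ := re_le_norm _
      _ ≤ ‖R (R v)‖ * ‖R v‖ := norm_inner_le_norm _ _
      _ ≤ (C * ‖R v‖) * ‖R v‖ := by
          have := hC (R v)
          nlinarith [norm_nonneg (R v)]
      _ = C * ‖R v‖ ^ 2 := by ring
  by_cases hX : ‖R v‖ = 0
  · rw [hX]
    simpa using mul_nonneg hC0 (hpos v)
  · have hXpos : 0 < ‖R v‖ ^ 2 := by positivity
    have hcs : (‖R v‖ ^ 2) * (‖R v‖ ^ 2) ≤ (C * re ⟪R v, v⟫) * (‖R v‖ ^ 2) := by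
      nlinarith [hpos v]
    exact le_of_mul_le_mul_right hcs hXpos

end AuxRichter

open ContinuousLinearMap

set_option maxHeartbeats 2000000 in
/-- **Richter's norm identity.** For an analytic 2-isometry `S`,
with `L_S = (S*S)⁻¹S*`, `P_S = I − S L_S` and `D_S = (S*S − I)^{1/2}`, one has
`‖x‖² = Σ_{k≥0} ‖P_S L_S^k x‖² + Σ_{k≥1} ‖D_S L_S^k x‖²` for all `x`. -/
theorem analytic_twoIsometry_norm_identity
    {H : Type*} [NormedAddCommGroup H] [InnerProductSpace ℂ H] [CompleteSpace H]
    (S : H →L[ℂ] H)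
    (h2iso : ∀ h : H, ‖S (S h)‖ ^ 2 - 2 * ‖S h‖ ^ 2 + ‖h‖ ^ 2 = 0)
    (hanalytic : (⨅ n : ℕ, LinearMap.range ((S ^ n : H →L[ℂ] H) : H →ₗ[ℂ] H)) = ⊥)
    (R : H →L[ℂ] H)
    (hR1 : R ∘L (adjoint S ∘L S) = 1) (hR2 : (adjoint S ∘L S) ∘L R = 1)
    (D : H →L[ℂ] H) (hDpos : D.IsPositive) (hDsq : D ∘L D = adjoint S ∘L S - 1) :
    ∀ L P : H →L[ℂ] H, L = R ∘L adjoint S → P = 1 - S ∘L L →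
      ∀ x : H,
        Summable (fun k : ℕ => ‖P ((L ^ k) x)‖ ^ 2) ∧
        Summable (fun k : ℕ => ‖D ((L ^ (k + 1)) x)‖ ^ 2) ∧
        ‖x‖ ^ 2 = (∑' k : ℕ, ‖P ((L ^ k) x)‖ ^ 2)
          + ∑' k : ℕ, ‖D ((L ^ (k + 1)) x)‖ ^ 2 := by
  intro L P hL hP x
  have hDsa : ContinuousLinearMap.adjoint D = D := hDpos.isSelfAdjoint
  -- (S*S) v = v + D (D v)
  have hAv : ∀ v : H, adjoint S (S v) = v + D (D v) := by
    intro v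
    have h := congrArg (fun T : H →L[ℂ] H => T v) hDsq
    simp only [comp_apply, sub_apply, one_apply_eq_self] at h
    rw [h]; abel
  -- lem1 : ‖S v‖² = ‖v‖² + ‖D v‖²
  have lem1 : ∀ v : H, ‖S v‖ ^ 2 = ‖v‖ ^ 2 + ‖D v‖ ^ 2 := by
    intro v
    have h1 : (inner ℂ (S v) (S v) : ℂ) = inner ℂ (adjoint S (S v)) v :=
      (adjoint_inner_left S v (S v)).symm
    have h2 : (inner ℂ (D (D v)) v : ℂ) = inner ℂ (D v) (D v) := by
      have h := adjoint_inner_left D v (D v)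
      rwa [hDsa] at h
    rw [hAv, inner_add_left, h2] at h1
    have h3 := congrArg RCLike.re h1
    simp only [map_add] at h3
    rw [inner_self_eq_norm_sq, inner_self_eq_norm_sq, inner_self_eq_norm_sq] at h3
    exact h3
  -- lem2 : L (S v) = v
  have lem2 : ∀ v : H, L (S v) = v := by
    intro v
    have h := congrArg (fun T : H →L[ℂ] H => T v) hR1
    simp only [comp_apply, one_apply] at h
    rw [hL]; simpa [comp_apply] using h
  -- lem3 : S* (P v) = 0
  have lem3 : ∀ v : H, adjoint S (P v) = 0 := by
    intro v
    have h := congrArg (fun T : H →L[ℂ] H => T (adjoint S v)) hR2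
    simp only [comp_apply, one_apply_eq_self] at h
    rw [hP, hL]
    simp only [sub_apply, one_apply_eq_self, comp_apply, map_sub]
    rw [h, sub_self]
  -- lem4 : ‖y‖² = ‖P y‖² + ‖L y‖² + ‖D (L y)‖²
  have lem4 : ∀ y : H, ‖y‖ ^ 2 = ‖P y‖ ^ 2 + ‖L y‖ ^ 2 + ‖D (L y)‖ ^ 2 := by
    intro y
    have hdec : y = P y + S (L y) := by
      rw [hP]; simp only [sub_apply, one_apply, comp_apply]; abel
    have horth : RCLike.re (inner ℂ (P y) (S (L y)) : ℂ) = 0 := by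
      have h := adjoint_inner_left S (L y) (P y)
      rw [lem3] at h
      simp only [inner_zero_left] at h
      rw [← h]; simp
    calc ‖y‖ ^ 2 = ‖P y + S (L y)‖ ^ 2 := by rw [← hdec]
      _ = ‖P y‖ ^ 2 + 2 * RCLike.re (inner ℂ (P y) (S (L y)) : ℂ) + ‖S (L y)‖ ^ 2 :=
          norm_add_sq _ _
      _ = ‖P y‖ ^ 2 + ‖L y‖ ^ 2 + ‖D (L y)‖ ^ 2 := by rw [horth, lem1]; ring
  -- lem5 : ‖D (S v)‖² = ‖D v‖²
  have lem5 : ∀ v : H, ‖D (S v)‖ ^ 2 = ‖D v‖ ^ 2 := by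
    intro v
    have h1 := lem1 (S v)
    have h2 := h2iso v
    have h3 := lem1 v
    linarith
  have hSsucc : ∀ (n : ℕ) (v : H), (S ^ (n + 1)) v = (S ^ n) (S v) := by
    intro n v; rw [pow_succ]; rfl
  have hSsucc' : ∀ (n : ℕ) (v : H), (S ^ (n + 1)) v = S ((S ^ n) v) := by
    intro n v; rw [pow_succ']; rfl
  -- lem6
  have lem6 : ∀ (n : ℕ) (v : H), ‖D ((S ^ n) v)‖ ^ 2 = ‖D v‖ ^ 2 := by
    intro n
    induction n with
    | zero => intro v; simp
    | succ n ih =>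
      intro v
      rw [hSsucc, ih (S v), lem5 v]
  -- lem7
  have lem7 : ∀ (n : ℕ) (v : H), ‖(S ^ n) v‖ ^ 2 = ‖v‖ ^ 2 + n * ‖D v‖ ^ 2 := by
    intro n
    induction n with
    | zero => intro v; simp
    | succ n ih =>
      intro v
      rw [hSsucc, ih (S v), lem1 v, lem5 v]
      push_cast; ring
  -- lem8
  have lem8 : ∀ (n : ℕ) (v : H), (L ^ n) ((S ^ n) v) = v := by
    intro n
    induction n with
    | zero => intro v; simp
    | succ n ih =>
      intro v
      have hL1 : (L ^ (n + 1)) ((S ^ (n + 1)) v) = (L ^ n) (L ((S ^ (n + 1)) v)) := by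
        rw [pow_succ]; rfl
      rw [hL1, hSsucc', lem2, ih]
  have hLsucc : ∀ (n : ℕ) (v : H), (L ^ (n + 1)) v = L ((L ^ n) v) := by
    intro n v; rw [pow_succ']; rfl
  -- sequences
  have hnn : ∀ y : H, (0:ℝ) ≤ ‖y‖ ^ 2 := fun y => by positivity
  have hstep : ∀ n : ℕ, ‖(L ^ n) x‖ ^ 2
      = (‖P ((L ^ n) x)‖ ^ 2 + ‖D ((L ^ (n + 1)) x)‖ ^ 2) + ‖(L ^ (n + 1)) x‖ ^ 2 := by
    intro n
    have h := lem4 ((L ^ n) x)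
    rw [← hLsucc n x] at h
    linarith
  have htel : ∀ n : ℕ, ∑ k ∈ Finset.range n,
      (‖P ((L ^ k) x)‖ ^ 2 + ‖D ((L ^ (k + 1)) x)‖ ^ 2) + ‖(L ^ n) x‖ ^ 2 = ‖x‖ ^ 2 := by
    intro n
    induction n with
    | zero => simp
    | succ n ih =>
      rw [Finset.sum_range_succ]
      have := hstep n
      linarith
  have hr_succ_le : ∀ n : ℕ, ‖(L ^ (n + 1)) x‖ ^ 2 ≤ ‖(L ^ n) x‖ ^ 2 := by
    intro n
    have := hstep n
    nlinarith [hnn (P ((L ^ n) x)), hnn (D ((L ^ (n + 1)) x))]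
  have hr_anti : Antitone (fun n : ℕ => ‖(L ^ n) x‖ ^ 2) := antitone_nat_of_succ_le hr_succ_le
  have hsum_t : Summable (fun k : ℕ => ‖P ((L ^ k) x)‖ ^ 2 + ‖D ((L ^ (k + 1)) x)‖ ^ 2) := by
    apply summable_of_sum_range_le (c := ‖x‖ ^ 2) (fun k => by positivity)
    intro n
    have h1 := htel n
    nlinarith [hnn ((L ^ n) x)]
  have hsa : Summable (fun k : ℕ => ‖P ((L ^ k) x)‖ ^ 2) :=
    Summable.of_nonneg_of_le (fun k => hnn _) (fun k => le_add_of_nonneg_right (hnn _)) hsum_t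
  have hsb : Summable (fun k : ℕ => ‖D ((L ^ (k + 1)) x)‖ ^ 2) :=
    Summable.of_nonneg_of_le (fun k => hnn _) (fun k => le_add_of_nonneg_left (hnn _)) hsum_t
  set c := ⨅ n : ℕ, ‖(L ^ n) x‖ ^ 2 with hcdef
  have hbdd : BddBelow (Set.range fun n : ℕ => ‖(L ^ n) x‖ ^ 2) := by
    refine ⟨0, ?_⟩
    rintro y ⟨n, rfl⟩
    exact hnn _
  have hrc : Tendsto (fun n : ℕ => ‖(L ^ n) x‖ ^ 2) atTop (nhds c) :=
    tendsto_atTop_ciInf hr_anti hbdd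
  have hc_le : ∀ n : ℕ, c ≤ ‖(L ^ n) x‖ ^ 2 := fun n => ciInf_le hbdd n
  have hc0 : (0:ℝ) ≤ c := le_ciInf fun n => hnn _
  have hczero : c = 0 := by
    -- L is a contraction
    have hcontr1 : ∀ v : H, ‖L v‖ ≤ ‖v‖ := by
      intro v
      have h := lem4 v
      have h2 : ‖L v‖ ^ 2 ≤ ‖v‖ ^ 2 := by nlinarith [hnn (P v), hnn (D (L v))]
      have h3 := Real.sqrt_le_sqrt h2
      rwa [Real.sqrt_sq (norm_nonneg _), Real.sqrt_sq (norm_nonneg _)] at h3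
    have hcontr : ∀ (n : ℕ) (v : H), ‖(L ^ n) v‖ ≤ ‖v‖ := by
      intro n
      induction n with
      | zero => intro v; simp
      | succ n ih =>
        intro v
        rw [hLsucc]
        exact (hcontr1 _).trans (ih v)
    have hLop : ∀ n : ℕ, ‖(L ^ n : H →L[ℂ] H)‖ ≤ 1 := fun n =>
      opNorm_le_bound _ zero_le_one fun v => by simpa using hcontr n v
    -- the operators T n = (L^n)* (L^n)
    set T : ℕ → (H →L[ℂ] H) := fun n => adjoint (L ^ n) ∘L (L ^ n) with hTdef
    have hT_sa : ∀ n : ℕ, IsSelfAdjoint (T n) := by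
      intro n
      show star (T n) = T n
      simp only [hTdef]
      rw [star_eq_adjoint, adjoint_comp, adjoint_adjoint]
    have hT_inner : ∀ (n : ℕ) (v : H), RCLike.re (inner ℂ (T n v) v : ℂ) = ‖(L ^ n) v‖ ^ 2 := by
      intro n v
      simp only [hTdef, comp_apply]
      rw [adjoint_inner_left]
      exact inner_self_eq_norm_sq _
    have hT_bound : ∀ (n : ℕ) (v : H), ‖T n v‖ ≤ ‖v‖ := by
      intro n v
      simp only [hTdef, comp_apply]
      have hadjn : ‖adjoint (L ^ n : H →L[ℂ] H)‖ = ‖(L ^ n : H →L[ℂ] H)‖ := by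
        rw [← star_eq_adjoint]
        exact norm_star _
      calc ‖adjoint (L ^ n) ((L ^ n) v)‖ ≤ ‖adjoint (L ^ n : H →L[ℂ] H)‖ * ‖(L ^ n) v‖ :=
            le_opNorm _ _
        _ ≤ 1 * ‖v‖ := by
            rw [hadjn]
            exact mul_le_mul (hLop n) (hcontr n v) (norm_nonneg _) zero_le_one
        _ = ‖v‖ := one_mul _
    have hrv_anti : ∀ (v : H) (m n : ℕ), m ≤ n → ‖(L ^ n) v‖ ^ 2 ≤ ‖(L ^ m) v‖ ^ 2 := by
      intro v
      have hmono : Antitone (fun k : ℕ => ‖(L ^ k) v‖ ^ 2) := by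
        apply antitone_nat_of_succ_le
        intro k
        have h := lem4 ((L ^ k) v)
        rw [← hLsucc k v] at h
        nlinarith [hnn (P ((L ^ k) v)), hnn (D ((L ^ (k + 1)) v))]
      exact fun m n h => hmono h
    set w : ℕ → H := fun n => T n x with hwdef
    have hw_dist : ∀ m n : ℕ, m ≤ n →
        ‖w m - w n‖ ^ 2 ≤ 2 * (‖(L ^ m) x‖ ^ 2 - ‖(L ^ n) x‖ ^ 2) := by
      intro m n hmn
      have h1 : w m - w n = (T m - T n) x := by simp [hwdef, sub_apply]
      have hsa' : IsSelfAdjoint (T m - T n) := (hT_sa m).sub (hT_sa n)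
      have hpos' : ∀ v : H, 0 ≤ RCLike.re (inner ℂ ((T m - T n) v) v : ℂ) := by
        intro v
        rw [sub_apply, inner_sub_left, map_sub, hT_inner, hT_inner]
        have := hrv_anti v m n hmn
        linarith
      have hb' : ∀ v : H, ‖(T m - T n) v‖ ≤ 2 * ‖v‖ := by
        intro v
        rw [sub_apply]
        calc ‖T m v - T n v‖ ≤ ‖T m v‖ + ‖T n v‖ := norm_sub_le _ _
          _ ≤ 2 * ‖v‖ := by
              have h2 := hT_bound m v
              have h3 := hT_bound n v
              linarith
      have haux := aux_pos_cs (T m - T n) hsa' hpos' 2 (by norm_num) hb' x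
      rw [h1]
      refine haux.trans (le_of_eq ?_)
      rw [sub_apply, inner_sub_left, map_sub, hT_inner, hT_inner]
    have hwc : CauchySeq w := by
      apply cauchySeq_of_le_tendsto_0 (fun N : ℕ => Real.sqrt (2 * (‖(L ^ N) x‖ ^ 2 - c)))
      · intro n m N hn hm
        have key : ∀ p q : ℕ, p ≤ q → N ≤ p →
            dist (w p) (w q) ≤ Real.sqrt (2 * (‖(L ^ N) x‖ ^ 2 - c)) := by
          intro p q hpq hNp
          rw [dist_eq_norm]
          apply (Real.le_sqrt (norm_nonneg _) (by nlinarith [hc_le N])).mpr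
          have h1 := hw_dist p q hpq
          have h2 : ‖(L ^ p) x‖ ^ 2 ≤ ‖(L ^ N) x‖ ^ 2 := hrv_anti x N p hNp
          have h3 : c ≤ ‖(L ^ q) x‖ ^ 2 := hc_le q
          linarith
        rcases le_total n m with h | h
        · exact key n m h hn
        · rw [dist_comm]
          exact key m n h hm
      · have h1 : Tendsto (fun N : ℕ => 2 * (‖(L ^ N) x‖ ^ 2 - c)) atTop (nhds 0) := by
          have := (hrc.sub_const c).const_mul 2
          simpa using this
        have h2 := h1.sqrt
        simpa using h2
    obtain ⟨W, hW⟩ := cauchySeq_tendsto_of_complete hwc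
    -- the decreasing ranges
    set K : ℕ → Submodule ℂ H := fun n => LinearMap.range ((S ^ n : H →L[ℂ] H) : H →ₗ[ℂ] H) with hKdef
    have hSlow : ∀ (n : ℕ) (v : H), ‖v‖ ≤ ‖(S ^ n) v‖ := by
      intro n v
      have h := lem7 n v
      have hn0 : (0 : ℝ) ≤ (n : ℝ) := Nat.cast_nonneg n
      have h2 : ‖v‖ ^ 2 ≤ ‖(S ^ n) v‖ ^ 2 := by
        have := mul_nonneg hn0 (hnn (D v))
        linarith
      have h3 := Real.sqrt_le_sqrt h2
      rwa [Real.sqrt_sq (norm_nonneg _), Real.sqrt_sq (norm_nonneg _)] at h3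
    have hclosed : ∀ n : ℕ, IsClosed ((K n : Submodule ℂ H) : Set H) := by
      intro n
      have hanti : AntilipschitzWith 1 ⇑(S ^ n : H →L[ℂ] H) :=
        ContinuousLinearMap.antilipschitz_of_bound _ (fun v => by simpa using hSlow n v)
      have h := hanti.isClosed_range (S ^ n : H →L[ℂ] H).uniformContinuous
      have heq : ((K n : Submodule ℂ H) : Set H) = Set.range ⇑(S ^ n : H →L[ℂ] H) := by
        exact LinearMap.coe_range _
      rw [heq]
      exact h
    have hK_anti : ∀ {m n : ℕ}, m ≤ n → K n ≤ K m := by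
      intro m n hmn v hv
      obtain ⟨y, hy⟩ := hv
      refine ⟨(S ^ (n - m)) y, ?_⟩
      show (S ^ m) ((S ^ (n - m)) y) = v
      rw [← hy]
      have h1 : (S ^ m) ((S ^ (n - m)) y) = ((S ^ m) * (S ^ (n - m))) y := rfl
      rw [h1, ← pow_add, Nat.add_sub_cancel' hmn]
      rfl
    have hproj : ∀ m : ℕ, Submodule.HasOrthogonalProjection (K m) := by
      intro m
      haveI := (hclosed m).completeSpace_coe
      infer_instance
    have heP : ∀ m : ℕ, ∃ z : H, z ∈ K m ∧ ∀ v ∈ K m, (inner ℂ (W - z) v : ℂ) = 0 := by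
      intro m
      haveI := hproj m
      exact ⟨(Submodule.orthogonalProjection (K m) W : H), Submodule.coe_mem _,
        fun v hv => Submodule.starProjection_inner_eq_zero W v hv⟩
    choose e he_mem he_orth using heP
    have he_inner : ∀ m n : ℕ, m ≤ n → (inner ℂ (e m) (e n) : ℂ) = inner ℂ (e n) (e n) := by
      intro m n hmn
      have h1 : (inner ℂ (W - e m) (e n) : ℂ) = 0 := he_orth m (e n) (hK_anti hmn (he_mem n))
      have h2 : (inner ℂ (W - e n) (e n) : ℂ) = 0 := he_orth n (e n) (he_mem n)
      rw [inner_sub_left, sub_eq_zero] at h1 h2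
      exact h1.symm.trans h2
    have he_dist : ∀ m n : ℕ, m ≤ n → ‖e m - e n‖ ^ 2 = ‖e m‖ ^ 2 - ‖e n‖ ^ 2 := by
      intro m n hmn
      have h := norm_sub_sq (𝕜 := ℂ) (e m) (e n)
      have h2 : RCLike.re (inner ℂ (e m) (e n) : ℂ) = ‖e n‖ ^ 2 := by
        rw [he_inner m n hmn]
        exact inner_self_eq_norm_sq _
      rw [h2] at h
      linarith
    have hd_anti : Antitone (fun m : ℕ => ‖e m‖ ^ 2) := by
      intro m n hmn
      have h := he_dist m n hmn
      have h2 := hnn (e m - e n)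
      simp only
      linarith
    have hd_bdd : BddBelow (Set.range fun m : ℕ => ‖e m‖ ^ 2) := by
      refine ⟨0, ?_⟩
      rintro y ⟨m, rfl⟩
      exact hnn _
    have hdc : Tendsto (fun m : ℕ => ‖e m‖ ^ 2) atTop (nhds (⨅ m : ℕ, ‖e m‖ ^ 2)) :=
      tendsto_atTop_ciInf hd_anti hd_bdd
    have hdc_le : ∀ m : ℕ, (⨅ m : ℕ, ‖e m‖ ^ 2) ≤ ‖e m‖ ^ 2 := fun m => ciInf_le hd_bdd m
    have hec : CauchySeq e := by
      apply cauchySeq_of_le_tendsto_0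
        (fun N : ℕ => Real.sqrt (‖e N‖ ^ 2 - ⨅ m : ℕ, ‖e m‖ ^ 2))
      · intro n m N hn hm
        have key : ∀ p q : ℕ, p ≤ q → N ≤ p →
            dist (e p) (e q) ≤ Real.sqrt (‖e N‖ ^ 2 - ⨅ m : ℕ, ‖e m‖ ^ 2) := by
          intro p q hpq hNp
          rw [dist_eq_norm]
          apply (Real.le_sqrt (norm_nonneg _) (by nlinarith [hdc_le N])).mpr
          have h1 := he_dist p q hpq
          have h2 : ‖e p‖ ^ 2 ≤ ‖e N‖ ^ 2 := hd_anti hNp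
          have h3 := hdc_le q
          linarith
        rcases le_total n m with h | h
        · exact key n m h hn
        · rw [dist_comm]
          exact key m n h hm
      · have h1 : Tendsto (fun N : ℕ => ‖e N‖ ^ 2 - ⨅ m : ℕ, ‖e m‖ ^ 2) atTop (nhds 0) := by
          have := hdc.sub_const (⨅ m : ℕ, ‖e m‖ ^ 2)
          simpa using this
        have h2 := h1.sqrt
        simpa using h2
    obtain ⟨Z, hZ⟩ := cauchySeq_tendsto_of_complete hec
    have hZ_mem : ∀ m : ℕ, Z ∈ K m := by
      intro m
      have hev : ∀ᶠ n in atTop, e n ∈ ((K m : Submodule ℂ H) : Set H) := by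
        filter_upwards [eventually_ge_atTop m] with n hn
        exact hK_anti hn (he_mem n)
      exact (hclosed m).mem_of_tendsto hZ hev
    have hZ0 : Z = 0 := by
      have hmem : Z ∈ ⨅ n : ℕ, K n := (Submodule.mem_iInf K).mpr hZ_mem
      rw [hKdef] at hmem
      rw [hanalytic] at hmem
      exact (Submodule.mem_bot ℂ).mp hmem
    have he_norm0 : Tendsto (fun m : ℕ => ‖e m‖) atTop (nhds 0) := by
      have h := hZ.norm
      rw [hZ0, norm_zero] at h
      exact h
    -- the vectors u n
    set u : ℕ → H := fun n => (S ^ n) ((L ^ n) x) with hudef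
    have hu_mem : ∀ m n : ℕ, m ≤ n → u n ∈ K m := fun m n hmn =>
      hK_anti hmn ⟨(L ^ n) x, rfl⟩
    have h_run : ∀ n : ℕ, ‖(L ^ n) x‖ ^ 2 = RCLike.re (inner ℂ (u n) (w n) : ℂ) := by
      intro n
      have h1 : (inner ℂ (u n) (w n) : ℂ) = inner ℂ ((L ^ n) (u n)) ((L ^ n) x) := by
        simp only [hwdef, hTdef, comp_apply]
        rw [adjoint_inner_right]
      have h2 : (L ^ n) (u n) = (L ^ n) x := by
        simp only [hudef]
        exact lem8 n ((L ^ n) x)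
      rw [h1, h2]
      exact (inner_self_eq_norm_sq _).symm
    -- infinitely many n with small n * ‖D L^n x‖²
    have hbsq : Summable (fun n : ℕ => ‖D ((L ^ n) x)‖ ^ 2) :=
      (summable_nat_add_iff 1).mp hsb
    have hinf : ∀ N : ℕ, ∃ n : ℕ, N ≤ n ∧ (n : ℝ) * ‖D ((L ^ n) x)‖ ^ 2 ≤ 1 := by
      intro N
      by_contra hcon
      push_neg at hcon
      have h1 : ∀ k : ℕ, 1 / ((k : ℝ) + (N + 1)) ≤ ‖D ((L ^ (k + (N + 1))) x)‖ ^ 2 := by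
        intro k
        have hk : N ≤ k + (N + 1) := by omega
        have h2 := hcon (k + (N + 1)) hk
        have hc1 : ((k + (N + 1) : ℕ) : ℝ) = (k : ℝ) + (N + 1) := by push_cast; ring
        rw [hc1] at h2
        have hpos : (0 : ℝ) < (k : ℝ) + (N + 1) := by positivity
        rw [div_le_iff₀ hpos]
        nlinarith [h2]
      have h3 : Summable (fun k : ℕ => ‖D ((L ^ (k + (N + 1))) x)‖ ^ 2) :=
        (summable_nat_add_iff (N + 1)).mpr hbsq
      have h4 : Summable (fun k : ℕ => 1 / ((k : ℝ) + (N + 1))) :=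
        Summable.of_nonneg_of_le (fun k => by positivity) h1 h3
      have h6 : Summable (fun k : ℕ => 1 / (((k + (N + 1) : ℕ)) : ℝ)) :=
        h4.congr (fun k => by push_cast; ring)
      have h5 : Summable (fun k : ℕ => 1 / (k : ℝ)) :=
        (summable_nat_add_iff (f := fun j : ℕ => 1 / (j : ℝ)) (N + 1)).mp h6
      exact Real.not_summable_one_div_natCast h5
    -- final estimate
    set M := Real.sqrt (‖x‖ ^ 2 + 1) with hMdef
    have hM_pos : 0 < M := Real.sqrt_pos.mpr (by positivity)
    have hM_sq : M ^ 2 = ‖x‖ ^ 2 + 1 := Real.sq_sqrt (by positivity)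
    have hkey : ∀ ε : ℝ, 0 < ε → c ≤ 2 * M * ε := by
      intro ε hε
      obtain ⟨m0, hm0⟩ := (Metric.tendsto_atTop.mp he_norm0) ε hε
      obtain ⟨N1, hN1⟩ := (Metric.tendsto_atTop.mp hW) ε hε
      obtain ⟨n, hn_ge, hn_b⟩ := hinf (max m0 N1)
      have hnm : m0 ≤ n := le_trans (le_max_left _ _) hn_ge
      have hnN : N1 ≤ n := le_trans (le_max_right _ _) hn_ge
      have hu_le : ‖u n‖ ≤ M := by
        have h1 : ‖u n‖ ^ 2 = ‖(L ^ n) x‖ ^ 2 + (n : ℝ) * ‖D ((L ^ n) x)‖ ^ 2 := by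
          simp only [hudef]
          exact lem7 n ((L ^ n) x)
        have h2 : ‖(L ^ n) x‖ ^ 2 ≤ ‖x‖ ^ 2 := by
          have h3 := hrv_anti x 0 n (Nat.zero_le n)
          simpa using h3
        have h3 : ‖u n‖ ^ 2 ≤ M ^ 2 := by
          rw [hM_sq]
          linarith
        have h4 := Real.sqrt_le_sqrt h3
        rwa [Real.sqrt_sq (norm_nonneg _), Real.sqrt_sq hM_pos.le] at h4
      have hm0' : ‖e m0‖ < ε := by
        have h := hm0 m0 le_rfl
        rwa [Real.dist_eq, sub_zero, abs_of_nonneg (norm_nonneg _)] at h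
      have hN1' : ‖w n - W‖ < ε := by
        have h := hN1 n hnN
        rwa [dist_eq_norm] at h
      have hzero : (inner ℂ (u n) (W - e m0) : ℂ) = 0 :=
        inner_eq_zero_symm.mpr (he_orth m0 (u n) (hu_mem m0 n hnm))
      have hsplit : (inner ℂ (u n) (w n) : ℂ)
          = inner ℂ (u n) (e m0) + inner ℂ (u n) (W - e m0) + inner ℂ (u n) (w n - W) := by
        rw [← inner_add_right, ← inner_add_right]
        congr 1
        abel
      have hre1 : RCLike.re (inner ℂ (u n) (e m0) : ℂ) ≤ M * ε := by
        calc RCLike.re (inner ℂ (u n) (e m0) : ℂ) ≤ ‖(inner ℂ (u n) (e m0) : ℂ)‖ :=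
              RCLike.re_le_norm _
          _ ≤ ‖u n‖ * ‖e m0‖ := norm_inner_le_norm _ _
          _ ≤ M * ε := by nlinarith [norm_nonneg (u n), norm_nonneg (e m0)]
      have hre2 : RCLike.re (inner ℂ (u n) (w n - W) : ℂ) ≤ M * ε := by
        calc RCLike.re (inner ℂ (u n) (w n - W) : ℂ) ≤ ‖(inner ℂ (u n) (w n - W) : ℂ)‖ :=
              RCLike.re_le_norm _
          _ ≤ ‖u n‖ * ‖w n - W‖ := norm_inner_le_norm _ _
          _ ≤ M * ε := by nlinarith [norm_nonneg (u n), norm_nonneg (w n - W)]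
      have hfinal : ‖(L ^ n) x‖ ^ 2 ≤ 2 * M * ε := by
        rw [h_run n, hsplit, hzero]
        simp only [add_zero, map_add]
        linarith
      exact (hc_le n).trans hfinal
    by_contra hne
    have hcpos : 0 < c := lt_of_le_of_ne hc0 (Ne.symm hne)
    have h := hkey (c / (4 * M)) (by positivity)
    have heq : 2 * M * (c / (4 * M)) = c / 2 := by
      field_simp
      ring
    rw [heq] at h
    linarith
  -- conclusion
  refine ⟨hsa, hsb, ?_⟩
  have h1 : Tendsto (fun n : ℕ => ∑ k ∈ Finset.range n,
      (‖P ((L ^ k) x)‖ ^ 2 + ‖D ((L ^ (k + 1)) x)‖ ^ 2)) atTop (nhds (‖x‖ ^ 2 - c)) := by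
    have h2 : (fun n : ℕ => ∑ k ∈ Finset.range n,
        (‖P ((L ^ k) x)‖ ^ 2 + ‖D ((L ^ (k + 1)) x)‖ ^ 2))
        = fun n : ℕ => ‖x‖ ^ 2 - ‖(L ^ n) x‖ ^ 2 := by
      funext n
      linarith [htel n]
    rw [h2]
    exact tendsto_const_nhds.sub hrc
  have h3 := hsum_t.hasSum.tendsto_sum_nat
  have h4 : (∑' k : ℕ, (‖P ((L ^ k) x)‖ ^ 2 + ‖D ((L ^ (k + 1)) x)‖ ^ 2)) = ‖x‖ ^ 2 - c :=
    tendsto_nhds_unique h3 h1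
  rw [Summable.tsum_add hsa hsb] at h4
  rw [hczero] at h4
  linarith
end

section
/- Let (T₁, T₂) be a pair of doubly commuting 2-isometries on a complex Hilbert space H and let E₁ := ker T₁*. Then for every integer m ≥ 0, T₁^m(⋂_{n≥0} T₂ⁿ(E₁)) = T₁^m(E₁) ∩ (⋂_{n≥0} T₂ⁿ(H)), and symmetrically with the roles of T₁ and T₂ (and E₂ := ker T₂*) interchanged. -/
open ContinuousLinearMap

namespace DCAux

variable {H : Type*} [NormedAddCommGroup H] [InnerProductSpace ℂ H] [CompleteSpace H]

local notation "⟪" x ", " y "⟫" => @inner ℂ _ _ x y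

lemma comm_apply {A B : H →L[ℂ] H} (h : A * B = B * A) (x : H) : A (B x) = B (A x) := by
  have := DFunLike.congr_fun h x
  simpa [mul_apply] using this

lemma norm_le_of_twoIso (T : H →L[ℂ] H)
    (h2 : ∀ h : H, ‖T (T h)‖ ^ 2 - 2 * ‖T h‖ ^ 2 + ‖h‖ ^ 2 = 0) (h : H) :
    ‖h‖ ≤ ‖T h‖ := by
  by_contra hlt
  push_neg at hlt
  set c : ℝ := ‖T h‖ ^ 2 - ‖h‖ ^ 2 with hc
  have hcneg : c < 0 := by
    have := pow_lt_pow_left₀ hlt (norm_nonneg _) two_ne_zero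
    simp only [hc]; linarith
  have step : ∀ n : ℕ, ‖(T ^ (n + 1)) h‖ ^ 2 = ‖(T ^ n) h‖ ^ 2 + c := by
    intro n
    induction n with
    | zero => simp [hc, pow_one]
    | succ n ih =>
      have h1 : (T ^ (n + 1)) h = T ((T ^ n) h) := by
        rw [pow_succ']; exact mul_apply_eq_comp _ _ _
      have h2' : (T ^ (n + 2)) h = T (T ((T ^ n) h)) := by
        rw [show n + 2 = (n + 1) + 1 from rfl, pow_succ', mul_apply_eq_comp, h1]
      have := h2 ((T ^ n) h)
      rw [← h1] at this
      rw [h2', ← h1]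
      linarith [this, ih]
  have key : ∀ n : ℕ, ‖(T ^ n) h‖ ^ 2 = ‖h‖ ^ 2 + n * c := by
    intro n
    induction n with
    | zero => simp
    | succ n ih => rw [step n, ih]; push_cast; ring
  set N : ℕ := ⌈‖h‖ ^ 2 / (-c)⌉₊ + 1 with hN
  have h1 : ‖h‖ ^ 2 / (-c) < (N : ℝ) := by
    have := Nat.le_ceil (‖h‖ ^ 2 / (-c))
    push_cast [hN]; linarith
  have h2' : ‖h‖ ^ 2 < (N : ℝ) * (-c) := (div_lt_iff₀ (by linarith)).mp h1
  have := key N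
  nlinarith [sq_nonneg ‖(T ^ N) h‖]

lemma injective_of_bound {T : H →L[ℂ] H} (hb : ∀ h : H, ‖h‖ ≤ ‖T h‖) :
    Function.Injective T := by
  intro x y hxy
  have := hb (x - y)
  rw [map_sub, hxy, sub_self, norm_zero] at this
  have : ‖x - y‖ = 0 := le_antisymm this (norm_nonneg _)
  rwa [norm_eq_zero, sub_eq_zero] at this

lemma injective_pow {T : H →L[ℂ] H} (hb : ∀ h : H, ‖h‖ ≤ ‖T h‖) (n : ℕ) :
    Function.Injective ⇑(T ^ n) := by
  induction n with
  | zero => intro x y hxy; simpa using hxy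
  | succ n ih =>
    intro x y hxy
    rw [pow_succ, mul_apply_eq_comp, mul_apply_eq_comp] at hxy
    exact injective_of_bound hb (ih hxy)

lemma ker_adjoint_eq_orthogonal (T : H →L[ℂ] H) :
    LinearMap.ker ((adjoint T : H →L[ℂ] H) : H →ₗ[ℂ] H) = (LinearMap.range (T : H →ₗ[ℂ] H))ᗮ := by
  ext x
  simp only [LinearMap.mem_ker, Submodule.mem_orthogonal, ContinuousLinearMap.coe_coe]
  constructor
  · rintro hx u ⟨y, rfl⟩
    calc ⟪T y, x⟫ = ⟪y, adjoint T x⟫ := (adjoint_inner_right T y x).symm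
    _ = 0 := by rw [hx, inner_zero_right]
  · intro hx
    have h0 : ⟪adjoint T x, adjoint T x⟫ = 0 := by
      rw [adjoint_inner_left]
      have := hx (T (adjoint T x)) ⟨adjoint T x, rfl⟩
      rw [← inner_conj_symm, this, map_zero]
    exact inner_self_eq_zero.mp h0

lemma one_side (T₁ T₂ : H →L[ℂ] H)
    (hb₁ : ∀ h : H, ‖h‖ ≤ ‖T₁ h‖) (hb₂ : ∀ h : H, ‖h‖ ≤ ‖T₂ h‖)
    (hcomm : T₁ ∘L T₂ = T₂ ∘L T₁)
    (hdcomm : T₁ ∘L adjoint T₂ = adjoint T₂ ∘L T₁) (m : ℕ) :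
    Submodule.map ((T₁ ^ m : H →L[ℂ] H) : H →ₗ[ℂ] H)
        (⨅ n : ℕ, Submodule.map ((T₂ ^ n : H →L[ℂ] H) : H →ₗ[ℂ] H) (LinearMap.ker ((adjoint T₁ : H →L[ℂ] H) : H →ₗ[ℂ] H)))
      = Submodule.map ((T₁ ^ m : H →L[ℂ] H) : H →ₗ[ℂ] H) (LinearMap.ker ((adjoint T₁ : H →L[ℂ] H) : H →ₗ[ℂ] H))
          ⊓ (⨅ n : ℕ, LinearMap.range ((T₂ ^ n : H →L[ℂ] H) : H →ₗ[ℂ] H)) := by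
  have hC : T₁ * T₂ = T₂ * T₁ := hcomm
  have hCpow : ∀ n : ℕ, T₁ * T₂ ^ n = T₂ ^ n * T₁ := fun n =>
    ((Commute.pow_right hC n) : _)
  have hstar : adjoint T₁ * T₂ = T₂ * adjoint T₁ := by
    have := congrArg adjoint hdcomm
    simp only [adjoint_comp, adjoint_adjoint] at this
    exact this.symm
  have hstarpow : ∀ n : ℕ, adjoint T₁ * T₂ ^ n = T₂ ^ n * adjoint T₁ := fun n =>
    ((Commute.pow_right hstar n) : _)
  -- E₁ invariant under T₂ ^ n
  have hE1 : ∀ (n : ℕ) (x : H), adjoint T₁ x = 0 → adjoint T₁ ((T₂ ^ n) x) = 0 := by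
    intro n x hx
    rw [comm_apply (hstarpow n), hx, map_zero]
  -- closed range of T₁, orthogonal decomposition
  have hKclosed : IsClosed ((LinearMap.range (T₁ : H →ₗ[ℂ] H) : Submodule ℂ H) : Set H) := by
    have anti := T₁.antilipschitz_of_bound (K := 1) (fun x => by simpa using hb₁ x)
    have := anti.isClosed_range T₁.uniformContinuous
    simpa [LinearMap.coe_range] using this
  haveI : CompleteSpace (LinearMap.range (T₁ : H →ₗ[ℂ] H) : Submodule ℂ H) := hKclosed.completeSpace_coe
  -- the descent lemma
  have descend1 : ∀ (n : ℕ) (z hh : H), T₁ z = (T₂ ^ n) hh → ∃ g, z = (T₂ ^ n) g := by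
    intro n z hh hz
    obtain ⟨y, hy, w, hw, hhw⟩ :=
      (LinearMap.range (T₁ : H →ₗ[ℂ] H) : Submodule ℂ H).exists_add_mem_mem_orthogonal hh
    obtain ⟨g, rfl⟩ := hy
    have hwE : adjoint T₁ w = 0 := by
      have : w ∈ LinearMap.ker ((adjoint T₁ : H →L[ℂ] H) : H →ₗ[ℂ] H) := by
        rw [ker_adjoint_eq_orthogonal]; exact hw
      exact this
    have hcomb : (T₂ ^ n) w = T₁ (z - (T₂ ^ n) g) := by
      have : T₁ z = T₁ ((T₂ ^ n) g) + (T₂ ^ n) w := by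
        rw [hz, hhw, ContinuousLinearMap.coe_coe, map_add, comm_apply (hCpow n)]
      rw [map_sub, this]; abel
    have hmem1 : (T₂ ^ n) w ∈ (LinearMap.range (T₁ : H →ₗ[ℂ] H) : Submodule ℂ H) :=
      hcomb ▸ ⟨z - (T₂ ^ n) g, rfl⟩
    have hmem2 : (T₂ ^ n) w ∈ ((LinearMap.range (T₁ : H →ₗ[ℂ] H) : Submodule ℂ H))ᗮ := by
      rw [← ker_adjoint_eq_orthogonal]
      exact hE1 n w hwE
    have hw0 : (T₂ ^ n) w = 0 := by
      have := (Submodule.mem_orthogonal _ _).mp hmem2 _ hmem1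
      exact inner_self_eq_zero.mp this
    have hwz : w = 0 := injective_pow hb₂ n (by rw [hw0, map_zero])
    refine ⟨g, injective_of_bound hb₁ ?_⟩
    rw [hz, hhw, hwz, add_zero, ContinuousLinearMap.coe_coe, comm_apply (hCpow n)]
  have descend : ∀ (m : ℕ) (n : ℕ) (z : H),
      (T₁ ^ m) z ∈ LinearMap.range ((T₂ ^ n : H →L[ℂ] H) : H →ₗ[ℂ] H) → ∃ g, z = (T₂ ^ n) g := by
    intro m
    induction m with
    | zero => intro n z hz; obtain ⟨g, hg⟩ := hz; exact ⟨g, by rw [ContinuousLinearMap.coe_coe] at hg; simpa using hg.symm⟩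
    | succ m ih =>
      intro n z hz
      obtain ⟨hh, hhh⟩ := hz
      rw [pow_succ, mul_apply_eq_comp] at hhh
      obtain ⟨g, hg⟩ := ih n (T₁ z) ⟨hh, hhh⟩
      exact descend1 n z g hg
  apply le_antisymm
  · rintro x hx
    obtain ⟨y, hy, rfl⟩ := hx
    rw [SetLike.mem_coe, Submodule.mem_iInf] at hy
    constructor
    · obtain ⟨e, he, hey⟩ := hy 0
      refine ⟨y, ?_, rfl⟩
      have : (T₂ ^ 0) e = e := by simp
      rw [ContinuousLinearMap.coe_coe, this] at hey
      rwa [← hey]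
    · rw [SetLike.mem_coe, Submodule.mem_iInf]
      intro n
      obtain ⟨e, _, hey⟩ := hy n
      refine ⟨(T₁ ^ m) e, ?_⟩
      have := comm_apply ((Commute.pow_pow hC m n) : T₁ ^ m * T₂ ^ n = T₂ ^ n * T₁ ^ m) e
      simp only [ContinuousLinearMap.coe_coe] at hey ⊢
      rw [← this, hey]
  · rintro x ⟨hx1, hx2⟩
    rw [SetLike.mem_coe, Submodule.mem_iInf] at hx2
    rw [SetLike.mem_coe] at hx1
    obtain ⟨e, he, rfl⟩ := hx1
    refine ⟨e, ?_, rfl⟩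
    rw [SetLike.mem_coe, Submodule.mem_iInf]

    intro n
    obtain ⟨g, hg⟩ := descend m n e (hx2 n)
    refine ⟨g, ?_, hg.symm⟩
    have hg0 : (T₂ ^ n) (adjoint T₁ g) = 0 := by
      rw [← comm_apply (hstarpow n), ← hg]
      exact he
    have : adjoint T₁ g = 0 := injective_pow hb₂ n (by rw [hg0, map_zero])
    exact this

end DCAux

/-- For a doubly commuting pair of 2-isometries `(T₁, T₂)`,
with `E₁ = ker T₁*` and `E₂ = ker T₂*`, one has for every `m ≥ 0`:
`T₁^m(⋂ₙ T₂ⁿ(E₁)) = T₁^m(E₁) ∩ ⋂ₙ T₂ⁿ(H)`, and symmetrically. -/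
theorem doublyCommuting_twoIsometries_image_of_intersection
    {H : Type*} [NormedAddCommGroup H] [InnerProductSpace ℂ H] [CompleteSpace H]
    (T₁ T₂ : H →L[ℂ] H)
    (h2iso₁ : ∀ h : H, ‖T₁ (T₁ h)‖ ^ 2 - 2 * ‖T₁ h‖ ^ 2 + ‖h‖ ^ 2 = 0)
    (h2iso₂ : ∀ h : H, ‖T₂ (T₂ h)‖ ^ 2 - 2 * ‖T₂ h‖ ^ 2 + ‖h‖ ^ 2 = 0)
    (hcomm : T₁ ∘L T₂ = T₂ ∘L T₁)
    (hdcomm : T₁ ∘L adjoint T₂ = adjoint T₂ ∘L T₁) :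
    (∀ m : ℕ,
      Submodule.map ((T₁ ^ m : H →L[ℂ] H) : H →ₗ[ℂ] H)
          (⨅ n : ℕ, Submodule.map ((T₂ ^ n : H →L[ℂ] H) : H →ₗ[ℂ] H) (LinearMap.ker ((adjoint T₁ : H →L[ℂ] H) : H →ₗ[ℂ] H)))
        = Submodule.map ((T₁ ^ m : H →L[ℂ] H) : H →ₗ[ℂ] H) (LinearMap.ker ((adjoint T₁ : H →L[ℂ] H) : H →ₗ[ℂ] H))
            ⊓ (⨅ n : ℕ, LinearMap.range ((T₂ ^ n : H →L[ℂ] H) : H →ₗ[ℂ] H))) ∧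
    (∀ m : ℕ,
      Submodule.map ((T₂ ^ m : H →L[ℂ] H) : H →ₗ[ℂ] H)
          (⨅ n : ℕ, Submodule.map ((T₁ ^ n : H →L[ℂ] H) : H →ₗ[ℂ] H) (LinearMap.ker ((adjoint T₂ : H →L[ℂ] H) : H →ₗ[ℂ] H)))
        = Submodule.map ((T₂ ^ m : H →L[ℂ] H) : H →ₗ[ℂ] H) (LinearMap.ker ((adjoint T₂ : H →L[ℂ] H) : H →ₗ[ℂ] H))
            ⊓ (⨅ n : ℕ, LinearMap.range ((T₁ ^ n : H →L[ℂ] H) : H →ₗ[ℂ] H))) := by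
  have hb₁ := DCAux.norm_le_of_twoIso T₁ h2iso₁
  have hb₂ := DCAux.norm_le_of_twoIso T₂ h2iso₂
  have hdcomm' : T₂ ∘L adjoint T₁ = adjoint T₁ ∘L T₂ := by
    have := congrArg ContinuousLinearMap.adjoint hdcomm
    simp only [adjoint_comp, adjoint_adjoint] at this
    exact this
  exact ⟨DCAux.one_side T₁ T₂ hb₁ hb₂ hcomm hdcomm,
    DCAux.one_side T₂ T₁ hb₂ hb₁ hcomm.symm hdcomm'⟩
end

section
/- Let (T₁, T₂) be a pair of doubly commuting 2-isometries on a complex Hilbert space H. For i = 1, 2 set Lᵢ := (Tᵢ*Tᵢ)⁻¹Tᵢ* and Pᵢ := I − TᵢLᵢ. Then P₁P₂ = P₂P₁, and P := P₁P₂ is the orthogonal projection of H onto ker T₁* ∩ ker T₂*. -/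
open ContinuousLinearMap

private lemma commute_of_inv {M : Type*} [Monoid M] {a r x : M}
    (hl : r * a = 1) (hr : a * r = 1) (h : Commute a x) : Commute r x := by
  have key : r * x = x * r := by
    calc r * x = r * x * (a * r) := by rw [hr, mul_one]
      _ = r * (x * a) * r := by simp only [mul_assoc]
      _ = r * (a * x) * r := by rw [← h.eq]
      _ = (r * a) * (x * r) := by simp only [mul_assoc]
      _ = x * r := by rw [hl, one_mul]
  exact key

/-- For a doubly commuting pair of 2-isometries `(T₁, T₂)`,
with `Lᵢ = (Tᵢ*Tᵢ)⁻¹Tᵢ*` and `Pᵢ = I − TᵢLᵢ`, the projections `P₁` and `P₂`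
commute and `P := P₁P₂` is the orthogonal projection onto `ker T₁* ∩ ker T₂*`. -/
theorem doublyCommuting_twoIsometries_projections_commute
    {H : Type*} [NormedAddCommGroup H] [InnerProductSpace ℂ H] [CompleteSpace H]
    (T₁ T₂ : H →L[ℂ] H)
    (h2iso₁ : ∀ h : H, ‖T₁ (T₁ h)‖ ^ 2 - 2 * ‖T₁ h‖ ^ 2 + ‖h‖ ^ 2 = 0)
    (h2iso₂ : ∀ h : H, ‖T₂ (T₂ h)‖ ^ 2 - 2 * ‖T₂ h‖ ^ 2 + ‖h‖ ^ 2 = 0)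
    (hcomm : T₁ ∘L T₂ = T₂ ∘L T₁)
    (hdcomm : T₁ ∘L adjoint T₂ = adjoint T₂ ∘L T₁)
    (R₁ R₂ : H →L[ℂ] H)
    (hR₁l : R₁ ∘L (adjoint T₁ ∘L T₁) = 1) (hR₁r : (adjoint T₁ ∘L T₁) ∘L R₁ = 1)
    (hR₂l : R₂ ∘L (adjoint T₂ ∘L T₂) = 1) (hR₂r : (adjoint T₂ ∘L T₂) ∘L R₂ = 1) :
    ∀ P₁ P₂ : H →L[ℂ] H,
      P₁ = 1 - T₁ ∘L (R₁ ∘L adjoint T₁) → P₂ = 1 - T₂ ∘L (R₂ ∘L adjoint T₂) →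
      P₁ ∘L P₂ = P₂ ∘L P₁ ∧
      IsSelfAdjoint (P₁ ∘L P₂) ∧
      (P₁ ∘L P₂) ∘L (P₁ ∘L P₂) = P₁ ∘L P₂ ∧
      LinearMap.range (P₁ ∘L P₂ : H →ₗ[ℂ] H)
        = LinearMap.ker (adjoint T₁ : H →ₗ[ℂ] H) ⊓ LinearMap.ker (adjoint T₂ : H →ₗ[ℂ] H) := by
  intro P₁ P₂ hP₁ hP₂
  set S₁ := adjoint T₁ with hS₁
  set S₂ := adjoint T₂ with hS₂
  -- basic commutation facts as `Commute`
  have hc1 : Commute T₁ T₂ := hcomm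
  have hc2 : Commute T₁ S₂ := hdcomm
  have hc4 : Commute S₁ S₂ := by
    have := congrArg adjoint hcomm
    rw [adjoint_comp, adjoint_comp] at this
    exact this.symm
  have hc3 : Commute S₁ T₂ := by
    have := congrArg adjoint hdcomm
    rw [adjoint_comp, adjoint_comp, adjoint_adjoint] at this
    exact this.symm
  -- inverse relations in mul form
  have hR₁l' : R₁ * (S₁ * T₁) = 1 := hR₁l
  have hR₁r' : (S₁ * T₁) * R₁ = 1 := hR₁r
  have hR₂l' : R₂ * (S₂ * T₂) = 1 := hR₂l
  have hR₂r' : (S₂ * T₂) * R₂ = 1 := hR₂r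
  -- A₁ commutes with T₂, S₂; A₂ commutes with T₁, S₁
  have hA₁T₂ : Commute (S₁ * T₁) T₂ := hc3.mul_left hc1
  have hA₁S₂ : Commute (S₁ * T₁) S₂ := hc4.mul_left hc2
  have hA₂T₁ : Commute (S₂ * T₂) T₁ := hc2.symm.mul_left hc1.symm
  have hA₂S₁ : Commute (S₂ * T₂) S₁ := hc4.symm.mul_left hc3.symm
  -- R₁ commutes with T₂, S₂; R₂ commutes with T₁, S₁
  have hR₁T₂ : Commute R₁ T₂ := commute_of_inv hR₁l' hR₁r' hA₁T₂
  have hR₁S₂ : Commute R₁ S₂ := commute_of_inv hR₁l' hR₁r' hA₁S₂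
  have hR₂T₁ : Commute R₂ T₁ := commute_of_inv hR₂l' hR₂r' hA₂T₁
  have hR₂S₁ : Commute R₂ S₁ := commute_of_inv hR₂l' hR₂r' hA₂S₁
  have hR₁R₂ : Commute R₁ R₂ :=
    (commute_of_inv hR₂l' hR₂r'
      (commute_of_inv hR₁l' hR₁r' (hA₂S₁.symm.mul_left hA₂T₁.symm)).symm).symm
  -- self-adjointness of R₁, R₂
  have hAsa₁ : star (S₁ * T₁) = S₁ * T₁ := by
    rw [star_mul, star_eq_adjoint, star_eq_adjoint, ← hS₁, hS₁, adjoint_adjoint]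
  have hAsa₂ : star (S₂ * T₂) = S₂ * T₂ := by
    rw [star_mul, star_eq_adjoint, star_eq_adjoint, ← hS₂, hS₂, adjoint_adjoint]
  have hRsa₁ : star R₁ = R₁ := by
    have h1 : star R₁ * (S₁ * T₁) = 1 := by
      have := congrArg star hR₁r'
      rwa [star_mul, hAsa₁, star_one] at this
    calc star R₁ = star R₁ * ((S₁ * T₁) * R₁) := by rw [hR₁r', mul_one]
      _ = (star R₁ * (S₁ * T₁)) * R₁ := (mul_assoc _ _ _).symm
      _ = R₁ := by rw [h1, one_mul]
  have hRsa₂ : star R₂ = R₂ := by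
    have h1 : star R₂ * (S₂ * T₂) = 1 := by
      have := congrArg star hR₂r'
      rwa [star_mul, hAsa₂, star_one] at this
    calc star R₂ = star R₂ * ((S₂ * T₂) * R₂) := by rw [hR₂r', mul_one]
      _ = (star R₂ * (S₂ * T₂)) * R₂ := (mul_assoc _ _ _).symm
      _ = R₂ := by rw [h1, one_mul]
  -- the projections Q₁, Q₂
  set Q₁ : H →L[ℂ] H := T₁ * (R₁ * S₁) with hQ₁
  set Q₂ : H →L[ℂ] H := T₂ * (R₂ * S₂) with hQ₂
  have hP₁' : P₁ = 1 - Q₁ := hP₁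
  have hP₂' : P₂ = 1 - Q₂ := hP₂
  have cT₁Q₂ : Commute T₁ Q₂ := hc1.mul_right (hR₂T₁.symm.mul_right hc2)
  have cR₁Q₂ : Commute R₁ Q₂ := hR₁T₂.mul_right (hR₁R₂.mul_right hR₁S₂)
  have cS₁Q₂ : Commute S₁ Q₂ := hc3.mul_right (hR₂S₁.symm.mul_right hc4)
  have hQc : Commute Q₁ Q₂ := cT₁Q₂.mul_left (cR₁Q₂.mul_left cS₁Q₂)
  have hQsa₁ : star Q₁ = Q₁ := by
    rw [hQ₁, star_mul, star_mul, hRsa₁, star_eq_adjoint, star_eq_adjoint, ← hS₁,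
      hS₁, adjoint_adjoint]
    calc T₁ * R₁ * S₁ = T₁ * (R₁ * S₁) := by rw [mul_assoc]
      _ = _ := rfl
  have hQsa₂ : star Q₂ = Q₂ := by
    rw [hQ₂, star_mul, star_mul, hRsa₂, star_eq_adjoint, star_eq_adjoint, ← hS₂,
      hS₂, adjoint_adjoint]
    rw [mul_assoc]
  have hQi₁ : Q₁ * Q₁ = Q₁ := by
    calc Q₁ * Q₁ = T₁ * ((R₁ * ((S₁ * T₁) * R₁)) * S₁) := by
          rw [hQ₁]; simp only [mul_assoc]
      _ = Q₁ := by rw [hR₁r', mul_one, hQ₁]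
  have hQi₂ : Q₂ * Q₂ = Q₂ := by
    calc Q₂ * Q₂ = T₂ * ((R₂ * ((S₂ * T₂) * R₂)) * S₂) := by
          rw [hQ₂]; simp only [mul_assoc]
      _ = Q₂ := by rw [hR₂r', mul_one, hQ₂]
  -- S₁ ∘ P₁ = 0 and S₂ ∘ P₂ = 0
  have hSQ₁ : S₁ * Q₁ = S₁ := by
    calc S₁ * Q₁ = ((S₁ * T₁) * R₁) * S₁ := by rw [hQ₁]; simp only [mul_assoc]
      _ = S₁ := by rw [hR₁r', one_mul]
  have hSQ₂ : S₂ * Q₂ = S₂ := by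
    calc S₂ * Q₂ = ((S₂ * T₂) * R₂) * S₂ := by rw [hQ₂]; simp only [mul_assoc]
      _ = S₂ := by rw [hR₂r', one_mul]
  have hSP₁ : S₁ * P₁ = 0 := by rw [hP₁', mul_sub, mul_one, hSQ₁, sub_self]
  have hSP₂ : S₂ * P₂ = 0 := by rw [hP₂', mul_sub, mul_one, hSQ₂, sub_self]
  -- P₁, P₂ commute
  have hPc : P₁ * P₂ = P₂ * P₁ := by
    rw [hP₁', hP₂']
    have h1 : (1 - Q₁) * (1 - Q₂) = 1 - Q₁ - Q₂ + Q₁ * Q₂ := by noncomm_ring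
    have h2 : (1 - Q₂) * (1 - Q₁) = 1 - Q₁ - Q₂ + Q₂ * Q₁ := by noncomm_ring
    rw [h1, h2, hQc.eq]
  have hPi₁ : P₁ * P₁ = P₁ := by
    rw [hP₁']
    have : (1 - Q₁) * (1 - Q₁) = 1 - Q₁ - (Q₁ - Q₁ * Q₁) := by noncomm_ring
    rw [this, hQi₁, sub_self, sub_zero]
  have hPi₂ : P₂ * P₂ = P₂ := by
    rw [hP₂']
    have : (1 - Q₂) * (1 - Q₂) = 1 - Q₂ - (Q₂ - Q₂ * Q₂) := by noncomm_ring
    rw [this, hQi₂, sub_self, sub_zero]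
  have hPsa₁ : star P₁ = P₁ := by rw [hP₁', star_sub, star_one, hQsa₁]
  have hPsa₂ : star P₂ = P₂ := by rw [hP₂', star_sub, star_one, hQsa₂]
  have hPP : (P₁ * P₂) * (P₁ * P₂) = P₁ * P₂ := by
    calc (P₁ * P₂) * (P₁ * P₂) = P₁ * ((P₂ * P₁) * P₂) := by simp only [mul_assoc]
      _ = P₁ * ((P₁ * P₂) * P₂) := by rw [← hPc]
      _ = (P₁ * P₁) * (P₂ * P₂) := by simp only [mul_assoc]
      _ = P₁ * P₂ := by rw [hPi₁, hPi₂]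
  refine ⟨hPc, ?_, hPP, ?_⟩
  · show star (P₁ * P₂) = P₁ * P₂
    rw [star_mul, hPsa₁, hPsa₂, ← hPc]
  · ext x
    simp only [Submodule.mem_inf, LinearMap.mem_ker, LinearMap.mem_range]
    constructor
    · rintro ⟨y, rfl⟩
      constructor
      · have : (S₁ * (P₁ * P₂)) y = (0 : H →L[ℂ] H) y := by
          rw [← mul_assoc, hSP₁, zero_mul]
        simpa using this
      · have : (S₂ * (P₁ * P₂)) y = (0 : H →L[ℂ] H) y := by
          rw [hPc, ← mul_assoc, hSP₂, zero_mul]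
        simpa using this
    · rintro ⟨h1, h2⟩
      refine ⟨x, ?_⟩
      have e1 : P₁ x = x := by
        rw [hP₁']
        have : Q₁ x = 0 := by
          have : Q₁ x = T₁ (R₁ (S₁ x)) := rfl
          rw [this, show S₁ x = 0 from h1]; simp
        simp [this]
      have e2 : P₂ x = x := by
        rw [hP₂']
        have : Q₂ x = 0 := by
          have : Q₂ x = T₂ (R₂ (S₂ x)) := rfl
          rw [this, show S₂ x = 0 from h2]; simp
        simp [this]
      show P₁ (P₂ x) = x
      rw [e2, e1]
end

section
/- Let (T₁, T₂) be a pair of doubly commuting 2-isometries on a complex Hilbert space H. Then both ⋂_{m≥0} T₁^m(H) and the closed linear span of ⋃_{m≥0} T₁^m(ker T₁*) reduce T₂ (and symmetrically with T₁ and T₂ interchanged). -/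
open ContinuousLinearMap

private lemma aux_comm_pow {H : Type*} [NormedAddCommGroup H] [InnerProductSpace ℂ H]
    {S T : H →L[ℂ] H} (h : S ∘L T = T ∘L S) (m : ℕ) (y : H) :
    S ((T ^ m) y) = (T ^ m) (S y) := by
  have hc : Commute S T := h
  have := (hc.pow_right m).eq
  calc S ((T ^ m) y) = (S * T ^ m) y := rfl
    _ = (T ^ m * S) y := by rw [this]
    _ = (T ^ m) (S y) := rfl

private lemma aux_inf {H : Type*} [NormedAddCommGroup H] [InnerProductSpace ℂ H]
    {S T : H →L[ℂ] H} (h : S ∘L T = T ∘L S) :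
    ∀ x ∈ ⨅ m : ℕ, LinearMap.range ((T ^ m : H →L[ℂ] H) : H →ₗ[ℂ] H), S x ∈ ⨅ m : ℕ, LinearMap.range ((T ^ m : H →L[ℂ] H) : H →ₗ[ℂ] H) := by
  intro x hx
  simp only [Submodule.mem_iInf] at hx ⊢
  intro m
  obtain ⟨y, hy⟩ := hx m
  exact ⟨S y, by rw [← hy]; exact (aux_comm_pow h m y).symm⟩

private lemma aux_closure {H : Type*} [NormedAddCommGroup H] [InnerProductSpace ℂ H]
    {S T A : H →L[ℂ] H} (hST : S ∘L T = T ∘L S) (hSA : S ∘L A = A ∘L S) :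
    ∀ x ∈ (⨆ m : ℕ, (LinearMap.ker (A : H →ₗ[ℂ] H)).map ((T ^ m : H →L[ℂ] H) : H →ₗ[ℂ] H)).topologicalClosure,
      S x ∈ (⨆ m : ℕ, (LinearMap.ker (A : H →ₗ[ℂ] H)).map ((T ^ m : H →L[ℂ] H) : H →ₗ[ℂ] H)).topologicalClosure := by
  intro x hx
  set p : Submodule ℂ H := ⨆ m : ℕ, (LinearMap.ker (A : H →ₗ[ℂ] H)).map ((T ^ m : H →L[ℂ] H) : H →ₗ[ℂ] H) with hp
  have hmaps : Set.MapsTo S (p : Set H) (p : Set H) := by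
    intro z hz
    have hz' : z ∈ p := hz
    -- use induction on supremum membership
    refine Submodule.iSup_induction _ (motive := fun z => S z ∈ p) hz' ?_ (by simp) ?_
    · rintro m w hw
      obtain ⟨k, hk, rfl⟩ := hw
      have hk' : A (S k) = 0 := by
        have : S (A k) = A (S k) := by
          have := congrArg (fun f => f k) hSA; simpa using this
        rw [← this, show A k = 0 from hk, map_zero]
      have : S ((T ^ m) k) = (T ^ m) (S k) := aux_comm_pow hST m k
      rw [ContinuousLinearMap.coe_coe, this]
      exact Submodule.mem_iSup_of_mem m ⟨S k, hk', rfl⟩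
    · intro a b ha hb
      rw [map_add]; exact p.add_mem ha hb
  exact map_mem_closure S.continuous hx hmaps

/-- For a doubly commuting pair of 2-isometries `(T₁, T₂)`,
both `⋂ₘ T₁^m(H)` and the closed span of `⋃ₘ T₁^m(ker T₁*)` reduce `T₂`,
and symmetrically with `T₁` and `T₂` interchanged. -/
theorem doublyCommuting_twoIsometries_wold_pieces_reduce
    {H : Type*} [NormedAddCommGroup H] [InnerProductSpace ℂ H] [CompleteSpace H]
    (T₁ T₂ : H →L[ℂ] H)
    (h2iso₁ : ∀ h : H, ‖T₁ (T₁ h)‖ ^ 2 - 2 * ‖T₁ h‖ ^ 2 + ‖h‖ ^ 2 = 0)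
    (h2iso₂ : ∀ h : H, ‖T₂ (T₂ h)‖ ^ 2 - 2 * ‖T₂ h‖ ^ 2 + ‖h‖ ^ 2 = 0)
    (hcomm : T₁ ∘L T₂ = T₂ ∘L T₁)
    (hdcomm : T₁ ∘L adjoint T₂ = adjoint T₂ ∘L T₁) :
    (∀ x ∈ ⨅ m : ℕ, LinearMap.range ((T₁ ^ m : H →L[ℂ] H) : H →ₗ[ℂ] H),
        T₂ x ∈ ⨅ m : ℕ, LinearMap.range ((T₁ ^ m : H →L[ℂ] H) : H →ₗ[ℂ] H)) ∧
    (∀ x ∈ ⨅ m : ℕ, LinearMap.range ((T₁ ^ m : H →L[ℂ] H) : H →ₗ[ℂ] H),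
        adjoint T₂ x ∈ ⨅ m : ℕ, LinearMap.range ((T₁ ^ m : H →L[ℂ] H) : H →ₗ[ℂ] H)) ∧
    (∀ x ∈ (⨆ m : ℕ, (LinearMap.ker (adjoint T₁ : H →ₗ[ℂ] H)).map ((T₁ ^ m : H →L[ℂ] H) : H →ₗ[ℂ] H)).topologicalClosure,
        T₂ x ∈ (⨆ m : ℕ, (LinearMap.ker (adjoint T₁ : H →ₗ[ℂ] H)).map ((T₁ ^ m : H →L[ℂ] H) : H →ₗ[ℂ] H)).topologicalClosure) ∧
    (∀ x ∈ (⨆ m : ℕ, (LinearMap.ker (adjoint T₁ : H →ₗ[ℂ] H)).map ((T₁ ^ m : H →L[ℂ] H) : H →ₗ[ℂ] H)).topologicalClosure,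
        adjoint T₂ x ∈
          (⨆ m : ℕ, (LinearMap.ker (adjoint T₁ : H →ₗ[ℂ] H)).map ((T₁ ^ m : H →L[ℂ] H) : H →ₗ[ℂ] H)).topologicalClosure) ∧
    (∀ x ∈ ⨅ m : ℕ, LinearMap.range ((T₂ ^ m : H →L[ℂ] H) : H →ₗ[ℂ] H),
        T₁ x ∈ ⨅ m : ℕ, LinearMap.range ((T₂ ^ m : H →L[ℂ] H) : H →ₗ[ℂ] H)) ∧
    (∀ x ∈ ⨅ m : ℕ, LinearMap.range ((T₂ ^ m : H →L[ℂ] H) : H →ₗ[ℂ] H),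
        adjoint T₁ x ∈ ⨅ m : ℕ, LinearMap.range ((T₂ ^ m : H →L[ℂ] H) : H →ₗ[ℂ] H)) ∧
    (∀ x ∈ (⨆ m : ℕ, (LinearMap.ker (adjoint T₂ : H →ₗ[ℂ] H)).map ((T₂ ^ m : H →L[ℂ] H) : H →ₗ[ℂ] H)).topologicalClosure,
        T₁ x ∈ (⨆ m : ℕ, (LinearMap.ker (adjoint T₂ : H →ₗ[ℂ] H)).map ((T₂ ^ m : H →L[ℂ] H) : H →ₗ[ℂ] H)).topologicalClosure) ∧
    (∀ x ∈ (⨆ m : ℕ, (LinearMap.ker (adjoint T₂ : H →ₗ[ℂ] H)).map ((T₂ ^ m : H →L[ℂ] H) : H →ₗ[ℂ] H)).topologicalClosure,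
        adjoint T₁ x ∈
          (⨆ m : ℕ, (LinearMap.ker (adjoint T₂ : H →ₗ[ℂ] H)).map ((T₂ ^ m : H →L[ℂ] H) : H →ₗ[ℂ] H)).topologicalClosure) := by
  -- derived commutation relations
  have hcomm' : T₂ ∘L T₁ = T₁ ∘L T₂ := hcomm.symm
  have hadj : adjoint T₂ ∘L adjoint T₁ = adjoint T₁ ∘L adjoint T₂ := by
    rw [← adjoint_comp, ← adjoint_comp, hcomm]
  have hadj' : adjoint T₁ ∘L adjoint T₂ = adjoint T₂ ∘L adjoint T₁ := hadj.symm
  have hdcomm₂ : adjoint T₂ ∘L T₁ = T₁ ∘L adjoint T₂ := hdcomm.symm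
  -- T₂ commutes with adjoint T₁ : take adjoints of hdcomm
  have hd2 : T₂ ∘L adjoint T₁ = adjoint T₁ ∘L T₂ := by
    have := congrArg adjoint hdcomm
    rw [adjoint_comp, adjoint_comp, adjoint_adjoint] at this
    exact this
  have hd2' : adjoint T₁ ∘L T₂ = T₂ ∘L adjoint T₁ := hd2.symm
  refine ⟨aux_inf hcomm', aux_inf hdcomm₂, aux_closure hcomm' hd2,
    aux_closure hdcomm₂ hadj, aux_inf hcomm, aux_inf hd2',
    aux_closure hcomm hdcomm, aux_closure hd2' hadj'⟩
end
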